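/- arXiv:1108.4007 — 2 statements merged into one kernel-verified Lean document; each statement's English description precedes it below -/
import Mathlib

section
/- Let Z be as in Theorem: Z = X \ {P_{i_1 j_1},…,P_{i_h j_h}} with X reduced ACM zero-dimensional in P^1 × P^1 and the removed points interior with pairwise distinct rows and columns. Then there exists a minimal set of generators of I_Z each of which is a product of bilinear forms of degree (1,0) and (0,1), i.e., each generator defines a curve that is a union of (1,0)- and (0,1)-lines. -/
/- Common setup: the bigraded coordinate ring of Q = P^1 x P^1, bigraded Hilbert
functions, point ideals, separators, minimal free resolutions, staircase (Ferrers)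
configurations of reduced ACM schemes. -/

open MvPolynomial

attribute [local instance] Classical.propDecidable

noncomputable section

/-- Variables of the bihomogeneous coordinate ring: `inl` = x₀,x₁ and `inr` = y₀,y₁. -/
abbrev BiVar := Fin 2 ⊕ Fin 2

/-- The bigraded coordinate ring S = k[x₀,x₁;y₀,y₁] of Q = P¹ × P¹. -/
abbrev S2 (k : Type) [Field k] := MvPolynomial BiVar k

/-- The bigrading weights: x-variables have degree (1,0), y-variables degree (0,1). -/
def bw : BiVar → ℕ × ℕ := Sum.elim (fun _ => (1, 0)) (fun _ => (0, 1))

/-- P¹ over k. -/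
abbrev P1 (k : Type) [Field k] := Projectivization k (Fin 2 → k)

/-- A point of Q = P¹ × P¹. -/
abbrev PtQ (k : Type) [Field k] := P1 k × P1 k

variable {k : Type} [Field k]

/-- Evaluation of a polynomial at (a representative of) a point of Q. -/
def evalPt (x : PtQ k) : S2 k →+* k :=
  MvPolynomial.eval (Sum.elim x.1.rep x.2.rep)

/-- An ideal is bihomogeneous if it contains all bihomogeneous components of its members. -/
def IsBihom (I : Ideal (S2 k)) : Prop :=
  ∀ f ∈ I, ∀ d : ℕ × ℕ, weightedHomogeneousComponent bw d f ∈ I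

/-- Saturation with respect to the irrelevant ideal (x₀,x₁) ∩ (y₀,y₁). -/
def IsSat (I : Ideal (S2 k)) : Prop :=
  ∀ f : S2 k, (∀ i j : Fin 2, X (Sum.inl i) * X (Sum.inr j) * f ∈ I) → f ∈ I

/-- The zero locus in Q of a (bihomogeneous) ideal. -/
def biZeroLocus (I : Ideal (S2 k)) : Set (PtQ k) :=
  {x | ∀ f ∈ I, ∀ d : ℕ × ℕ, evalPt x (weightedHomogeneousComponent bw d f) = 0}

/-- The (saturated) ideal of a point of Q: generated by the bihomogeneous forms vanishing there. -/
def pointIdeal (x : PtQ k) : Ideal (S2 k) :=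
  Ideal.span {f | (∃ d : ℕ × ℕ, IsWeightedHomogeneous bw f d) ∧ evalPt x f = 0}

/-- The saturated ideal of a reduced finite set of points of Q. -/
def idealOfFinset (Z : Finset (PtQ k)) : Ideal (S2 k) :=
  ⨅ x ∈ Z, pointIdeal x

/-- The bigraded piece of degree d of an ideal, as a k-subspace. -/
def Ipiece (I : Ideal (S2 k)) (d : ℕ × ℕ) : Submodule k (S2 k) :=
  (Submodule.restrictScalars k I) ⊓ weightedHomogeneousSubmodule k bw d

/-- The bigraded Hilbert function M_X(i,j) = dim S_{i,j} - dim (I_X)_{i,j}. -/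
def hilb (I : Ideal (S2 k)) (i j : ℕ) : ℕ :=
  Module.finrank k (weightedHomogeneousSubmodule k bw ((i, j) : ℕ × ℕ)) -
    Module.finrank k (Ipiece I (i, j))

/-- The Hilbert function extended by 0 to negative arguments. -/
def HM (I : Ideal (S2 k)) (i j : ℤ) : ℤ :=
  if 0 ≤ i ∧ 0 ≤ j then (hilb I i.toNat j.toNat : ℤ) else 0

/-- The first difference ΔM_X of the Hilbert function. -/
def ΔH (I : Ideal (S2 k)) (i j : ℤ) : ℤ :=
  HM I i j - HM I (i - 1) j - HM I i (j - 1) + HM I (i - 1) (j - 1)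

/-- Index of a nonzero coordinate of a nonzero vector in k². -/
def pivot (v : Fin 2 → k) : Fin 2 := if v 0 ≠ 0 then 0 else 1

/-- The other index. -/
def off : Fin 2 → Fin 2 := fun s => if s = 0 then 1 else 0

/-- Dehomogenization onto the affine chart around a point of Q. -/
def chartHom (x : PtQ k) : S2 k →+* MvPolynomial (Fin 2) k :=
  (aeval (R := k) (Sum.elim
    (fun i : Fin 2 => if i = pivot x.1.rep then 1 else X 0)
    (fun j : Fin 2 => if j = pivot x.2.rep then 1 else X 1))).toRingHom

/-- The affine coordinates of a point of Q in its chart. -/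
def affPt (x : PtQ k) : Fin 2 → k := fun u =>
  if u = 0 then x.1.rep (off (pivot x.1.rep)) / x.1.rep (pivot x.1.rep)
  else x.2.rep (off (pivot x.2.rep)) / x.2.rep (pivot x.2.rep)

/-- The multiplicity m_X(P): the length of the local ring O_{X,P}, computed in the
affine chart as the stable value of dim A/(I_aff + m_P^n). -/
def mult (I : Ideal (S2 k)) (x : PtQ k) : ℕ :=
  ⨆ n : ℕ, Module.finrank k
    (MvPolynomial (Fin 2) k ⧸
      (Ideal.map (chartHom x) I ⊔ (RingHom.ker (MvPolynomial.eval (affPt x))) ^ n))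

/-- X is arithmetically Cohen–Macaulay: depth S(X) = 2, i.e. there is a regular
sequence of length two on S/I_X inside the maximal ideal of S. -/
def IsACM (I : Ideal (S2 k)) : Prop :=
  ∃ f g : S2 k, constantCoeff f = 0 ∧ constantCoeff g = 0 ∧
    (∀ h : S2 k, f * h ∈ I → h ∈ I) ∧
    (∀ h : S2 k, g * h ∈ I ⊔ Ideal.span {f} → h ∈ I ⊔ Ideal.span {f})

/-- f is a separator of degree d for the point x relative to the residual scheme Z:
f is bihomogeneous of degree d, vanishes on Z, and is nonzero at x. -/
def IsSeparator (IZ : Ideal (S2 k)) (x : PtQ k) (f : S2 k) (d : ℕ × ℕ) : Prop :=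
  IsWeightedHomogeneous bw f d ∧ f ∈ IZ ∧ evalPt x f ≠ 0

/-- The set of separating degrees for x relative to Z. -/
def SepDegs (IZ : Ideal (S2 k)) (x : PtQ k) : Set (ℕ × ℕ) :=
  {d | ∃ f, IsSeparator IZ x f d}

/-- d is a minimal separating degree (componentwise partial order). -/
def IsMinSepDeg (IZ : Ideal (S2 k)) (x : PtQ k) (d : ℕ × ℕ) : Prop :=
  d ∈ SepDegs IZ x ∧ ∀ e ∈ SepDegs IZ x, ¬ e < d

/-- d is the unique minimal separating degree. -/
def UniqueMinSepDeg (IZ : Ideal (S2 k)) (x : PtQ k) (d : ℕ × ℕ) : Prop :=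
  IsMinSepDeg IZ x d ∧ ∀ e, IsMinSepDeg IZ x e → e = d

/-- f splits into a product of forms of degree (1,0) and (0,1), i.e. the curve f = 0
is a union of (1,0)- and (0,1)-lines. -/
def SplitsIntoLines (f : S2 k) : Prop :=
  ∃ L : Multiset (S2 k),
    (∀ l ∈ L, IsWeightedHomogeneous bw l ((1 : ℕ), (0 : ℕ)) ∨
      IsWeightedHomogeneous bw l ((0 : ℕ), (1 : ℕ))) ∧ f = L.prod

/-- `IsMFR3 I d0 d1 d2` : the ideal I has minimal bigraded free resolution
0 → ⊕ S(-d2 i) → ⊕ S(-d1 i) → ⊕ S(-d0 i) → I → 0, given by a minimal generating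
system of the listed degrees, a first-syzygy matrix A and a second-syzygy matrix B,
homogeneous of the appropriate degrees, with entries in the maximal ideal (minimality). -/
def IsMFR3 {ι₀ ι₁ ι₂ : Type} [Fintype ι₀] [Fintype ι₁] [Fintype ι₂]
    (I : Ideal (S2 k)) (d0 : ι₀ → ℕ × ℕ) (d1 : ι₁ → ℕ × ℕ) (d2 : ι₂ → ℕ × ℕ) : Prop :=
  ∃ (g : ι₀ → S2 k) (A : ι₁ → ι₀ → S2 k) (B : ι₂ → ι₁ → S2 k),
    (∀ i, IsWeightedHomogeneous bw (g i) (d0 i)) ∧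
    I = Ideal.span (Set.range g) ∧
    (∀ i j, A i j = 0 ∨ (d0 j ≤ d1 i ∧
      IsWeightedHomogeneous bw (A i j) ((d1 i).1 - (d0 j).1, (d1 i).2 - (d0 j).2))) ∧
    (∀ i j, constantCoeff (A i j) = 0) ∧
    (∀ i, ∑ j, A i j * g j = 0) ∧
    (∀ v : ι₀ → S2 k, ∑ j, v j * g j = 0 →
      ∃ c : ι₁ → S2 k, ∀ j, v j = ∑ i, c i * A i j) ∧
    (∀ i j, B i j = 0 ∨ (d1 j ≤ d2 i ∧
      IsWeightedHomogeneous bw (B i j) ((d2 i).1 - (d1 j).1, (d2 i).2 - (d1 j).2))) ∧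
    (∀ i j, constantCoeff (B i j) = 0) ∧
    (∀ i j, ∑ l, B i l * A l j = 0) ∧
    (∀ c : ι₁ → S2 k, (∀ j, ∑ i, c i * A i j = 0) →
      ∃ e : ι₂ → S2 k, ∀ i, c i = ∑ l, e l * B l i) ∧
    (∀ e : ι₂ → S2 k, (∀ i, ∑ l, e l * B l i = 0) → e = 0)

/-- A minimal free resolution of length 2 (the ACM case). -/
def IsMFR2 {ι₀ ι₁ : Type} [Fintype ι₀] [Fintype ι₁]
    (I : Ideal (S2 k)) (d0 : ι₀ → ℕ × ℕ) (d1 : ι₁ → ℕ × ℕ) : Prop :=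
  IsMFR3 I d0 d1 (fun e : Fin 0 => e.elim0)

/-- A reduced ACM zero-dimensional scheme in Q: points P_{ij} = R_i ∩ C_j indexed by a
lower-closed (staircase/Ferrers) diagram D in a grid of distinct (1,0)-lines R_i and
(0,1)-lines C_j, each containing at least one point of X. -/
structure Staircase (k : Type) [Field k] where
  a : ℕ
  b : ℕ
  R : ℕ → P1 k
  C : ℕ → P1 k
  hR : ∀ i ≤ a, ∀ i' ≤ a, R i = R i' → i = i'
  hC : ∀ j ≤ b, ∀ j' ≤ b, C j = C j' → j = j'
  D : Finset (ℕ × ℕ)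
  bound : ∀ p ∈ D, p.1 ≤ a ∧ p.2 ≤ b
  lower : ∀ p ∈ D, ∀ q : ℕ × ℕ, q.1 ≤ p.1 → q.2 ≤ p.2 → q ∈ D
  rows : ∀ i ≤ a, (i, 0) ∈ D
  cols : ∀ j ≤ b, (0, j) ∈ D

namespace Staircase

variable (T : Staircase k)

/-- The points of X. -/
def pts : Finset (PtQ k) := T.D.image (fun p => (T.R p.1, T.C p.2))

/-- The saturated ideal of X. -/
def ideal : Ideal (S2 k) := idealOfFinset T.pts

/-- #(X ∩ R_i). -/
def rowCount (i : ℕ) : ℕ := (T.D.filter (fun p => p.1 = i)).card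

/-- #(X ∩ C_j). -/
def colCount (j : ℕ) : ℕ := (T.D.filter (fun p => p.2 = j)).card

/-- (r,s) is a corner for X: P_{r-1,s}, P_{r,s-1} ∈ X but P_{r,s} ∉ X. -/
def IsCorner (r s : ℕ) : Prop :=
  0 < r ∧ 0 < s ∧ (r - 1, s) ∈ T.D ∧ (r, s - 1) ∈ T.D ∧ (r, s) ∉ T.D

/-- P_{ij} is an interior point of X: strictly dominated componentwise by some corner. -/
def Interior (i j : ℕ) : Prop :=
  (i, j) ∈ T.D ∧ ∃ r s, T.IsCorner r s ∧ i < r ∧ j < s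

/-- The saturated ideal of X minus the points of X indexed by E. -/
def residual (E : Finset (ℕ × ℕ)) : Ideal (S2 k) :=
  idealOfFinset ((T.D \ E).image (fun p => (T.R p.1, T.C p.2)))

end Staircase

/-- (i,j) is a vertex for a difference matrix c. -/
def IsVertexΔ (c : ℤ → ℤ → ℤ) (i j : ℤ) : Prop :=
  c (i - 1) j ≤ 0 ∧ c i (j - 1) ≤ 0 ∧ c (i - 1) (j - 1) = 1

/-- (i,j) is a corner for a difference matrix c. -/
def IsCornerΔ (c : ℤ → ℤ → ℤ) (i j : ℤ) : Prop :=
  c i j ≤ 0 ∧ c i (j - 1) = 1 ∧ c (i - 1) j = 1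

end
namespace Stmt16Aux

open MvPolynomial Finset

noncomputable section

variable {k : Type} [Field k]

/-- 2x2 determinant of two vectors. -/
def det2 (v w : Fin 2 → k) : k := v 1 * w 0 - v 0 * w 1

/-- The (1,0)-form vanishing at `p`. -/
def Lf (p : Fin 2 → k) : S2 k := C (p 1) * X (Sum.inl 0) - C (p 0) * X (Sum.inl 1)

/-- The (0,1)-form vanishing at `q`. -/
def Mf (q : Fin 2 → k) : S2 k := C (q 1) * X (Sum.inr 0) - C (q 0) * X (Sum.inr 1)

/-- Evaluation at a pair of vectors. -/
def Ev (p q : Fin 2 → k) : S2 k →+* k := (eval (Sum.elim p q))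

@[simp] lemma Ev_C (p q : Fin 2 → k) (c : k) : Ev p q (C c) = c := by simp [Ev]

@[simp] lemma Ev_Xl (p q : Fin 2 → k) (i : Fin 2) : Ev p q (X (Sum.inl i)) = p i := by
  simp [Ev]

@[simp] lemma Ev_Xr (p q : Fin 2 → k) (i : Fin 2) : Ev p q (X (Sum.inr i)) = q i := by
  simp [Ev]

@[simp] lemma Ev_Lf (p q p' : Fin 2 → k) : Ev p q (Lf p') = det2 p' p := by
  simp [Lf, det2]

@[simp] lemma Ev_Mf (p q q' : Fin 2 → k) : Ev p q (Mf q') = det2 q' q := by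
  simp [Mf, det2]

lemma det2_self (v : Fin 2 → k) : det2 v v = 0 := by simp [det2, mul_comm]

lemma ne_zero_vec_iff {v : Fin 2 → k} : v ≠ 0 ↔ v 0 ≠ 0 ∨ v 1 ≠ 0 := by
  constructor
  · intro h
    by_contra hc
    push_neg at hc
    exact h (funext fun i => by fin_cases i <;> simp [hc.1, hc.2])
  · rintro (h | h) hv <;> simp [hv] at h

/-- Two reps of distinct points of P¹ have nonzero determinant. -/
lemma det2_rep_ne {x y : P1 k} (h : x ≠ y) : det2 x.rep y.rep ≠ 0 := by
  intro hd
  apply h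
  rw [← x.mk_rep, ← y.mk_rep]
  rw [Projectivization.mk_eq_mk_iff' k _ _ x.rep_nonzero y.rep_nonzero]
  have hx := x.rep_nonzero
  have hy := y.rep_nonzero
  unfold det2 at hd
  by_cases h0 : y.rep 0 ≠ 0
  · refine ⟨x.rep 0 / y.rep 0, funext fun i => ?_⟩
    fin_cases i
    · simp [div_mul_cancel₀, h0]
    · simp only [Fin.mk_one, Pi.smul_apply, smul_eq_mul]
      rw [div_mul_eq_mul_div, div_eq_iff h0]
      linear_combination -hd
  · push_neg at h0
    have h1 : y.rep 1 ≠ 0 := by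
      rcases ne_zero_vec_iff.mp hy with h | h
      · exact absurd h0 h
      · exact h
    have hx0 : x.rep 0 = 0 := by
      rw [h0] at hd
      have h2 : x.rep 0 * y.rep 1 = 0 := by linear_combination -hd
      exact (mul_eq_zero.mp h2).resolve_right h1
    refine ⟨x.rep 1 / y.rep 1, funext fun i => ?_⟩
    fin_cases i
    · simp [h0, hx0]
    · simp [div_mul_cancel₀, h1]

end

end Stmt16Aux
namespace Stmt16Aux

open MvPolynomial Finset

noncomputable section

variable {k : Type} [Field k]

lemma CX_hom (a : k) (n : BiVar) : IsWeightedHomogeneous bw (C a * X n) (bw n) := by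
  have := (isWeightedHomogeneous_C bw a).mul (isWeightedHomogeneous_X k bw n)
  simpa using this

lemma Lf_hom (p : Fin 2 → k) : IsWeightedHomogeneous bw (Lf p) ((1 : ℕ), (0 : ℕ)) := by
  have h1 := CX_hom (p 1) (Sum.inl 0 : BiVar)
  have h2 := CX_hom (p 0) (Sum.inl 1 : BiVar)
  have : bw (Sum.inl 0 : BiVar) = ((1:ℕ), (0:ℕ)) := rfl
  rw [this] at h1
  have : bw (Sum.inl 1 : BiVar) = ((1:ℕ), (0:ℕ)) := rfl
  rw [this] at h2
  have := Submodule.sub_mem (weightedHomogeneousSubmodule k bw ((1:ℕ),(0:ℕ)))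
    ((mem_weightedHomogeneousSubmodule _ _ _ _).mpr h1)
    ((mem_weightedHomogeneousSubmodule _ _ _ _).mpr h2)
  exact (mem_weightedHomogeneousSubmodule _ _ _ _).mp this

lemma Mf_hom (q : Fin 2 → k) : IsWeightedHomogeneous bw (Mf q) ((0 : ℕ), (1 : ℕ)) := by
  have h1 := CX_hom (q 1) (Sum.inr 0 : BiVar)
  have h2 := CX_hom (q 0) (Sum.inr 1 : BiVar)
  have e1 : bw (Sum.inr 0 : BiVar) = ((0:ℕ), (1:ℕ)) := rfl
  rw [e1] at h1
  have e2 : bw (Sum.inr 1 : BiVar) = ((0:ℕ), (1:ℕ)) := rfl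
  rw [e2] at h2
  have := Submodule.sub_mem (weightedHomogeneousSubmodule k bw ((0:ℕ),(1:ℕ)))
    ((mem_weightedHomogeneousSubmodule _ _ _ _).mpr h1)
    ((mem_weightedHomogeneousSubmodule _ _ _ _).mpr h2)
  exact (mem_weightedHomogeneousSubmodule _ _ _ _).mp this

lemma hom_sub {f g : S2 k} {d : ℕ × ℕ} (hf : IsWeightedHomogeneous bw f d)
    (hg : IsWeightedHomogeneous bw g d) : IsWeightedHomogeneous bw (f - g) d := by
  have := Submodule.sub_mem (weightedHomogeneousSubmodule k bw d)
    ((mem_weightedHomogeneousSubmodule _ _ _ _).mpr hf)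
    ((mem_weightedHomogeneousSubmodule _ _ _ _).mpr hg)
  exact (mem_weightedHomogeneousSubmodule _ _ _ _).mp this

lemma hom_pow {f : S2 k} {d : ℕ × ℕ} (hf : IsWeightedHomogeneous bw f d) (n : ℕ) :
    IsWeightedHomogeneous bw (f ^ n) (n * d.1, n * d.2) := by
  induction n with
  | zero =>
      simpa only [zero_mul, pow_zero, Prod.mk_zero_zero] using (isWeightedHomogeneous_one k bw :
        IsWeightedHomogeneous bw (1 : S2 k) ((0:ℕ), (0:ℕ)))
  | succ n ih =>
      have := ih.mul hf
      rw [pow_succ] at *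
      convert this using 2 <;> simp [Prod.ext_iff] <;> ring

/-- Extract the first coordinate of the weighted degree. -/
lemma weight_fst (m : BiVar →₀ ℕ) :
    (Finsupp.weight bw m).1 = ∑ n ∈ m.support, m n * (bw n).1 := by
  rw [Finsupp.weight_apply, Finsupp.sum]
  rw [Prod.fst_sum]
  apply Finset.sum_congr rfl
  intro n _
  simp [Prod.smul_fst, smul_eq_mul]

lemma weight_snd (m : BiVar →₀ ℕ) :
    (Finsupp.weight bw m).2 = ∑ n ∈ m.support, m n * (bw n).2 := by
  rw [Finsupp.weight_apply, Finsupp.sum]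
  rw [Prod.snd_sum]
  apply Finset.sum_congr rfl
  intro n _
  simp [Prod.smul_snd, smul_eq_mul]

lemma bw_inl_fst (i : Fin 2) : (bw (Sum.inl i)).1 = 1 := rfl
lemma bw_inr_fst (i : Fin 2) : (bw (Sum.inr i)).1 = 0 := rfl
lemma bw_inl_snd (i : Fin 2) : (bw (Sum.inl i)).2 = 0 := rfl
lemma bw_inr_snd (i : Fin 2) : (bw (Sum.inr i)).2 = 1 := rfl

/-- If the x-degree is zero then no x-variable occurs in the monomial. -/
lemma inl_exp_zero {m : BiVar →₀ ℕ} (h : (Finsupp.weight bw m).1 = 0) (i : Fin 2) :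
    m (Sum.inl i) = 0 := by
  by_contra hne
  have hmem : (Sum.inl i : BiVar) ∈ m.support := Finsupp.mem_support_iff.mpr hne
  rw [weight_fst] at h
  have := Finset.sum_eq_zero_iff.mp h _ hmem
  rw [bw_inl_fst] at this
  omega

lemma inr_exp_zero {m : BiVar →₀ ℕ} (h : (Finsupp.weight bw m).2 = 0) (i : Fin 2) :
    m (Sum.inr i) = 0 := by
  by_contra hne
  have hmem : (Sum.inr i : BiVar) ∈ m.support := Finsupp.mem_support_iff.mpr hne
  rw [weight_snd] at h
  have := Finset.sum_eq_zero_iff.mp h _ hmem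
  rw [bw_inr_snd] at this
  omega

/-- A (0,0)-bihomogeneous polynomial is a constant. -/
lemma hom00_eq_C {f : S2 k} (hf : IsWeightedHomogeneous bw f ((0:ℕ), (0:ℕ))) :
    ∃ c : k, f = C c := by
  refine ⟨coeff 0 f, ?_⟩
  conv_lhs => rw [as_sum f]
  have hsupp : ∀ m ∈ f.support, m = 0 := by
    intro m hm
    have hd := hf (mem_support_iff.mp hm)
    ext n
    cases n with
    | inl i => exact inl_exp_zero (by rw [hd]) i
    | inr i => exact inr_exp_zero (by rw [hd]) i
  by_cases h0 : (0 : BiVar →₀ ℕ) ∈ f.support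
  · rw [Finset.sum_eq_single_of_mem _ h0]
    · simp [monomial_zero']
    · intro m hm hne; exact absurd (hsupp m hm) hne
  · have : f.support = ∅ := by
      ext m
      simp only [Finset.notMem_empty, iff_false]
      intro hm
      exact h0 (hsupp m hm ▸ hm)
    have hf0 : f = 0 := support_eq_empty.mp this
    rw [hf0]
    simp

lemma pivot_ne {p : Fin 2 → k} (hp : p ≠ 0) : p (pivot p) ≠ 0 := by
  unfold pivot
  split_ifs with h
  · exact h
  · push_neg at h
    rcases ne_zero_vec_iff.mp hp with h' | h'
    · exact absurd h h'
    · exact h'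

end

end Stmt16Aux
namespace Stmt16Aux

open MvPolynomial Finset

noncomputable section

variable {k : Type} [Field k]

lemma comp_decompose (f : S2 k) :
    f = ∑ d ∈ (weightedHomogeneousComponent_finsupp (w := bw) f).toFinset,
        weightedHomogeneousComponent bw d f := by
  conv_lhs => rw [← sum_weightedHomogeneousComponent bw f]
  rw [finsum_eq_sum _ (weightedHomogeneousComponent_finsupp f)]

lemma hcomp_mul {g : S2 k} {e : ℕ × ℕ} (hg : IsWeightedHomogeneous bw g e)
    (f : S2 k) (d : ℕ × ℕ) :
    weightedHomogeneousComponent bw (e + d) (g * f) =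
      g * weightedHomogeneousComponent bw d f := by
  conv_lhs => rw [comp_decompose f]
  rw [Finset.mul_sum, map_sum]
  have hterm : ∀ c ∈ (weightedHomogeneousComponent_finsupp (w := bw) f).toFinset,
      weightedHomogeneousComponent bw (e + d) (g * weightedHomogeneousComponent bw c f) =
        if c = d then g * weightedHomogeneousComponent bw c f else 0 := by
    intro c _
    have hc : IsWeightedHomogeneous bw (g * weightedHomogeneousComponent bw c f) (e + c) :=
      hg.mul (weightedHomogeneousComponent_isWeightedHomogeneous (w := bw) (n := c) (φ := f))
    by_cases hcd : c = d
    · subst hcd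
      rw [if_pos rfl, hc.weightedHomogeneousComponent_same]
    · rw [if_neg hcd, hc.weightedHomogeneousComponent_ne]
      intro hcon
      exact hcd (by
        have : e + c = e + d := hcon.symm
        exact add_left_cancel this)
  rw [Finset.sum_congr rfl hterm, Finset.sum_ite_eq' _ d
    (fun c => g * weightedHomogeneousComponent bw c f)]
  by_cases hd : d ∈ (weightedHomogeneousComponent_finsupp (w := bw) f).toFinset
  · rw [if_pos hd]
  · rw [if_neg hd]
    have hz : weightedHomogeneousComponent bw d f = 0 := by
      have := Set.Finite.mem_toFinset (weightedHomogeneousComponent_finsupp (w := bw) f) (a := d)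
      by_contra hne
      exact hd (this.mpr hne)
    rw [hz, mul_zero]

lemma hcomp_mul_ne {g : S2 k} {e : ℕ × ℕ} (hg : IsWeightedHomogeneous bw g e)
    (f : S2 k) (d : ℕ × ℕ) (hne : ∀ c, e + c ≠ d) :
    weightedHomogeneousComponent bw d (g * f) = 0 := by
  conv_lhs => rw [comp_decompose f]
  rw [Finset.mul_sum, map_sum]
  apply Finset.sum_eq_zero
  intro c _
  have hc : IsWeightedHomogeneous bw (g * weightedHomogeneousComponent bw c f) (e + c) :=
    hg.mul (weightedHomogeneousComponent_isWeightedHomogeneous (w := bw) (n := c) (φ := f))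
  exact hc.weightedHomogeneousComponent_ne d (fun hcon => hne c hcon.symm)

/-- Every bihomogeneous component of an element of a point ideal vanishes at the point. -/
lemma pointIdeal_comp_vanish {x : PtQ k} {f : S2 k} (hf : f ∈ pointIdeal x) :
    ∀ d : ℕ × ℕ, evalPt x (weightedHomogeneousComponent bw d f) = 0 := by
  induction hf using Submodule.span_induction with
  | mem g hg =>
      obtain ⟨⟨d0, hhom⟩, hval⟩ := hg
      intro d
      by_cases hdd : d = d0
      · subst hdd
        rw [hhom.weightedHomogeneousComponent_same]
        exact hval
      · rw [hhom.weightedHomogeneousComponent_ne d (fun hc => hdd hc)]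
        simp
  | zero => intro d; simp
  | add a b _ _ ha hb => intro d; rw [map_add, map_add, ha d, hb d, add_zero]
  | smul a b hbmem hab =>
      intro d
      rw [smul_eq_mul]
      conv_lhs => rw [show a * b = ∑ e ∈ (weightedHomogeneousComponent_finsupp (w := bw) a).toFinset,
            weightedHomogeneousComponent bw e a * b by rw [← Finset.sum_mul, ← comp_decompose]]
      rw [map_sum, map_sum]
      apply Finset.sum_eq_zero
      intro e _
      by_cases hle : ∃ c, e + c = d
      · obtain ⟨c, rfl⟩ := hle
        rw [hcomp_mul (weightedHomogeneousComponent_isWeightedHomogeneous (w := bw) (n := e) (φ := a)) b c]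
        rw [map_mul, hab c, mul_zero]
      · push_neg at hle
        rw [hcomp_mul_ne (weightedHomogeneousComponent_isWeightedHomogeneous (w := bw) (n := e) (φ := a)) b d hle]
        simp

end

end Stmt16Aux
namespace Stmt16Aux

open MvPolynomial Finset

noncomputable section

variable {k : Type} [Field k]

/-- Substitute the x-variables by the constants `p`, keep the y-variables. -/
def subX (p : Fin 2 → k) : BiVar → S2 k :=
  Sum.elim (fun i => C (p i)) (fun j => X (Sum.inr j))

def evX (p : Fin 2 → k) (f : S2 k) : S2 k := aeval (subX p) f

/-- Substitute the y-variables by the constants `q`, keep the x-variables. -/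
def subY (q : Fin 2 → k) : BiVar → S2 k :=
  Sum.elim (fun i => X (Sum.inl i)) (fun j => C (q j))

def evY (q : Fin 2 → k) (f : S2 k) : S2 k := aeval (subY q) f

/-- A (1,0) form with value 1 at p. -/
def lamX (p : Fin 2 → k) : S2 k := C ((p (pivot p))⁻¹) * X (Sum.inl (pivot p))

/-- A (0,1) form with value 1 at q. -/
def muY (q : Fin 2 → k) : S2 k := C ((q (pivot q))⁻¹) * X (Sum.inr (pivot q))

lemma lamX_hom (p : Fin 2 → k) : IsWeightedHomogeneous bw (lamX p) ((1:ℕ), (0:ℕ)) :=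
  CX_hom _ _

lemma muY_hom (q : Fin 2 → k) : IsWeightedHomogeneous bw (muY q) ((0:ℕ), (1:ℕ)) :=
  CX_hom _ _

lemma Ev_lamX {p : Fin 2 → k} (hp : p ≠ 0) (q : Fin 2 → k) : Ev p q (lamX p) = 1 := by
  simp [lamX, inv_mul_cancel₀ (pivot_ne hp)]

lemma Ev_muY {q : Fin 2 → k} (hq : q ≠ 0) (p : Fin 2 → k) : Ev p q (muY q) = 1 := by
  simp [muY, inv_mul_cancel₀ (pivot_ne hq)]

lemma lamX_pow_hom (p : Fin 2 → k) (n : ℕ) :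
    IsWeightedHomogeneous bw (lamX p ^ n) (n, (0:ℕ)) := by
  have := hom_pow (lamX_hom p) n
  simpa using this

lemma muY_pow_hom (q : Fin 2 → k) (n : ℕ) :
    IsWeightedHomogeneous bw (muY q ^ n) ((0:ℕ), n) := by
  have := hom_pow (muY_hom q) n
  simpa using this

/-- Substituting variables congruent to themselves mod I does not change the class mod I. -/
lemma mk_aeval_eq (I : Ideal (S2 k)) (s : BiVar → S2 k)
    (hs : ∀ n, Ideal.Quotient.mk I (s n) = Ideal.Quotient.mk I (X n)) (f : S2 k) :
    Ideal.Quotient.mk I (aeval s f) = Ideal.Quotient.mk I f := by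
  have h : (Ideal.Quotient.mkₐ k I).comp (aeval s) = Ideal.Quotient.mkₐ k I := by
    apply MvPolynomial.algHom_ext
    intro n
    simpa using hs n
  have := DFunLike.congr_fun h f
  simpa using this

lemma sX_mem (p : Fin 2 → k) (hp : p ≠ 0) (i : Fin 2) :
    C (p i) * lamX p - X (Sum.inl i) ∈ Ideal.span {Lf p} := by
  have hs : p (pivot p) ≠ 0 := pivot_ne hp
  have hi2 : ∀ j : Fin 2, j = 0 ∨ j = 1 := by decide
  by_cases he : i = pivot p
  · rw [he]
    have hz : C (p (pivot p)) * lamX p - X (Sum.inl (pivot p)) = (0 : S2 k) := by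
      rw [lamX, ← mul_assoc, ← C_mul, mul_inv_cancel₀ hs, C_1, one_mul, sub_self]
    rw [hz]
    exact Ideal.zero_mem _
  · apply Ideal.mem_span_singleton'.mpr
    rcases hi2 (pivot p) with h0 | h0 <;> rcases hi2 i with h1 | h1
    · exact absurd (h1.trans h0.symm) he
    · rw [h0] at hs
      refine ⟨C ((p 0)⁻¹), ?_⟩
      have hC : (C ((p 0)⁻¹) * C (p 0) : S2 k) = 1 := by
        rw [← C_mul, inv_mul_cancel₀ hs, C_1]
      rw [h1, Lf, lamX, h0]
      linear_combination (-(X (Sum.inl 1)) : S2 k) * hC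
    · rw [h0] at hs
      refine ⟨-C ((p 1)⁻¹), ?_⟩
      have hC : (C ((p 1)⁻¹) * C (p 1) : S2 k) = 1 := by
        rw [← C_mul, inv_mul_cancel₀ hs, C_1]
      rw [h1, Lf, lamX, h0]
      linear_combination (-(X (Sum.inl 0)) : S2 k) * hC
    · exact absurd (h1.trans h0.symm) he

lemma sY_mem (q : Fin 2 → k) (hq : q ≠ 0) (i : Fin 2) :
    C (q i) * muY q - X (Sum.inr i) ∈ Ideal.span {Mf q} := by
  have hs : q (pivot q) ≠ 0 := pivot_ne hq
  have hi2 : ∀ j : Fin 2, j = 0 ∨ j = 1 := by decide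
  by_cases he : i = pivot q
  · rw [he]
    have hz : C (q (pivot q)) * muY q - X (Sum.inr (pivot q)) = (0 : S2 k) := by
      rw [muY, ← mul_assoc, ← C_mul, mul_inv_cancel₀ hs, C_1, one_mul, sub_self]
    rw [hz]
    exact Ideal.zero_mem _
  · apply Ideal.mem_span_singleton'.mpr
    rcases hi2 (pivot q) with h0 | h0 <;> rcases hi2 i with h1 | h1
    · exact absurd (h1.trans h0.symm) he
    · rw [h0] at hs
      refine ⟨C ((q 0)⁻¹), ?_⟩
      have hC : (C ((q 0)⁻¹) * C (q 0) : S2 k) = 1 := by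
        rw [← C_mul, inv_mul_cancel₀ hs, C_1]
      rw [h1, Mf, muY, h0]
      linear_combination (-(X (Sum.inr 1)) : S2 k) * hC
    · rw [h0] at hs
      refine ⟨-C ((q 1)⁻¹), ?_⟩
      have hC : (C ((q 1)⁻¹) * C (q 1) : S2 k) = 1 := by
        rw [← C_mul, inv_mul_cancel₀ hs, C_1]
      rw [h1, Mf, muY, h0]
      linear_combination (-(X (Sum.inr 0)) : S2 k) * hC
    · exact absurd (h1.trans h0.symm) he

end

end Stmt16Aux
namespace Stmt16Aux

open MvPolynomial Finset

noncomputable section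

variable {k : Type} [Field k]

def sX (p : Fin 2 → k) : BiVar → S2 k :=
  Sum.elim (fun i => C (p i) * lamX p) (fun j => X (Sum.inr j))

def sY (q : Fin 2 → k) : BiVar → S2 k :=
  Sum.elim (fun i => X (Sum.inl i)) (fun j => C (q j) * muY q)

lemma aeval_sX (p : Fin 2 → k) {u v : ℕ} {f : S2 k}
    (hf : IsWeightedHomogeneous bw f (u, v)) :
    aeval (sX p) f = lamX p ^ u * evX p f := by
  rw [evX]
  conv_lhs => rw [as_sum f]
  conv_rhs => rw [as_sum f]
  rw [map_sum, map_sum, Finset.mul_sum]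
  apply Finset.sum_congr rfl
  intro m hm
  rw [aeval_monomial, aeval_monomial]
  have hdeg : Finsupp.weight bw m = (u, v) := hf (mem_support_iff.mp hm)
  have h1 : (m.prod fun n e => sX p n ^ e) =
      (m.prod fun n e => subX p n ^ e) * m.prod fun n e => lamX p ^ (e * (bw n).1) := by
    rw [Finsupp.prod, Finsupp.prod, Finsupp.prod, ← Finset.prod_mul_distrib]
    apply Finset.prod_congr rfl
    intro n _
    cases n with
    | inl i =>
        show (C (p i) * lamX p) ^ m (Sum.inl i) = _
        rw [mul_pow]
        norm_num [subX, bw_inl_fst]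
    | inr j =>
        show (X (Sum.inr j) : S2 k) ^ m (Sum.inr j) = _
        norm_num [subX, bw_inr_fst]
  have h2 : (m.prod fun n e => lamX p ^ (e * (bw n).1)) = lamX p ^ u := by
    rw [Finsupp.prod, Finset.prod_pow_eq_pow_sum]
    congr 1
    have hw := weight_fst m
    rw [hdeg] at hw
    exact hw.symm
  rw [h1, h2]
  ring

lemma aeval_sY (q : Fin 2 → k) {u v : ℕ} {f : S2 k}
    (hf : IsWeightedHomogeneous bw f (u, v)) :
    aeval (sY q) f = muY q ^ v * evY q f := by
  rw [evY]
  conv_lhs => rw [as_sum f]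
  conv_rhs => rw [as_sum f]
  rw [map_sum, map_sum, Finset.mul_sum]
  apply Finset.sum_congr rfl
  intro m hm
  rw [aeval_monomial, aeval_monomial]
  have hdeg : Finsupp.weight bw m = (u, v) := hf (mem_support_iff.mp hm)
  have h1 : (m.prod fun n e => sY q n ^ e) =
      (m.prod fun n e => subY q n ^ e) * m.prod fun n e => muY q ^ (e * (bw n).2) := by
    rw [Finsupp.prod, Finsupp.prod, Finsupp.prod, ← Finset.prod_mul_distrib]
    apply Finset.prod_congr rfl
    intro n _
    cases n with
    | inl i =>
        show (X (Sum.inl i) : S2 k) ^ m (Sum.inl i) = _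
        norm_num [subY, bw_inl_snd]
    | inr j =>
        show (C (q j) * muY q) ^ m (Sum.inr j) = _
        rw [mul_pow]
        norm_num [subY, bw_inr_snd]
  have h2 : (m.prod fun n e => muY q ^ (e * (bw n).2)) = muY q ^ v := by
    rw [Finsupp.prod, Finset.prod_pow_eq_pow_sum]
    congr 1
    have hw := weight_snd m
    rw [hdeg] at hw
    exact hw.symm
  rw [h1, h2]
  ring

lemma evX_hom (p : Fin 2 → k) {u v : ℕ} {f : S2 k}
    (hf : IsWeightedHomogeneous bw f (u, v)) :
    IsWeightedHomogeneous bw (evX p f) ((0:ℕ), v) := by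
  have hrw : evX p f = ∑ m ∈ f.support, aeval (subX p) (monomial m (coeff m f)) := by
    rw [evX]
    conv_lhs => rw [as_sum f]
    rw [map_sum]
  rw [hrw]
  apply IsWeightedHomogeneous.sum
  intro m hm
  rw [aeval_monomial]
  have hdeg : Finsupp.weight bw m = (u, v) := hf (mem_support_iff.mp hm)
  have hprod : IsWeightedHomogeneous bw (m.prod fun n e => subX p n ^ e)
      (∑ n ∈ m.support, ((0:ℕ), m n * (bw n).2)) := by
    rw [Finsupp.prod]
    apply IsWeightedHomogeneous.prod
    intro n _
    cases n with
    | inl i =>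
        show IsWeightedHomogeneous bw ((C (p i) : S2 k) ^ m (Sum.inl i)) _
        rw [← C_pow]
        have := isWeightedHomogeneous_C (R := k) bw ((p i) ^ m (Sum.inl i))
        convert this using 1 <;> simp [bw, Prod.ext_iff]
    | inr j =>
        show IsWeightedHomogeneous bw ((X (Sum.inr j) : S2 k) ^ m (Sum.inr j)) _
        have := hom_pow (isWeightedHomogeneous_X k bw (Sum.inr j)) (m (Sum.inr j))
        convert this using 1 <;> simp [bw, Prod.ext_iff]
  have hsum : (∑ n ∈ m.support, ((0:ℕ), m n * (bw n).2)) = ((0:ℕ), v) := by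
    rw [Prod.ext_iff]
    constructor
    · rw [Prod.fst_sum]
      simp
    · rw [Prod.snd_sum]
      have hw := weight_snd m
      rw [hdeg] at hw
      exact hw.symm
  rw [hsum] at hprod
  have hC : IsWeightedHomogeneous bw ((algebraMap k (S2 k)) (coeff m f)) 0 := by
    rw [MvPolynomial.algebraMap_eq]
    exact isWeightedHomogeneous_C bw _
  have := hC.mul hprod
  simpa using this

lemma evY_hom (q : Fin 2 → k) {u v : ℕ} {f : S2 k}
    (hf : IsWeightedHomogeneous bw f (u, v)) :
    IsWeightedHomogeneous bw (evY q f) (u, (0:ℕ)) := by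
  have hrw : evY q f = ∑ m ∈ f.support, aeval (subY q) (monomial m (coeff m f)) := by
    rw [evY]
    conv_lhs => rw [as_sum f]
    rw [map_sum]
  rw [hrw]
  apply IsWeightedHomogeneous.sum
  intro m hm
  rw [aeval_monomial]
  have hdeg : Finsupp.weight bw m = (u, v) := hf (mem_support_iff.mp hm)
  have hprod : IsWeightedHomogeneous bw (m.prod fun n e => subY q n ^ e)
      (∑ n ∈ m.support, (m n * (bw n).1, (0:ℕ))) := by
    rw [Finsupp.prod]
    apply IsWeightedHomogeneous.prod
    intro n _
    cases n with
    | inr j =>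
        show IsWeightedHomogeneous bw ((C (q j) : S2 k) ^ m (Sum.inr j)) _
        rw [← C_pow]
        have := isWeightedHomogeneous_C (R := k) bw ((q j) ^ m (Sum.inr j))
        convert this using 1 <;> simp [bw, Prod.ext_iff]
    | inl i =>
        show IsWeightedHomogeneous bw ((X (Sum.inl i) : S2 k) ^ m (Sum.inl i)) _
        have := hom_pow (isWeightedHomogeneous_X k bw (Sum.inl i)) (m (Sum.inl i))
        convert this using 1 <;> simp [bw, Prod.ext_iff]
  have hsum : (∑ n ∈ m.support, (m n * (bw n).1, (0:ℕ))) = (u, (0:ℕ)) := by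
    rw [Prod.ext_iff]
    constructor
    · rw [Prod.fst_sum]
      have hw := weight_fst m
      rw [hdeg] at hw
      exact hw.symm
    · rw [Prod.snd_sum]
      simp
  rw [hsum] at hprod
  have hC : IsWeightedHomogeneous bw ((algebraMap k (S2 k)) (coeff m f)) 0 := by
    rw [MvPolynomial.algebraMap_eq]
    exact isWeightedHomogeneous_C bw _
  have := hC.mul hprod
  simpa using this

lemma evX_of_deg0 (p : Fin 2 → k) {v : ℕ} {f : S2 k}
    (hf : IsWeightedHomogeneous bw f ((0:ℕ), v)) : evX p f = f := by
  rw [evX]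
  conv_rhs => rw [as_sum f]
  conv_lhs => rw [as_sum f]
  rw [map_sum]
  apply Finset.sum_congr rfl
  intro m hm
  have hdeg : Finsupp.weight bw m = ((0:ℕ), v) := hf (mem_support_iff.mp hm)
  rw [aeval_monomial, monomial_eq]
  rw [MvPolynomial.algebraMap_eq]
  congr 1
  apply Finsupp.prod_congr
  intro n hn
  cases n with
  | inl i =>
      exfalso
      have := inl_exp_zero (by rw [hdeg]) i
      exact (Finsupp.mem_support_iff.mp hn) this
  | inr j => rfl

lemma Ev_evX (p q p' : Fin 2 → k) (f : S2 k) : Ev p' q (evX p f) = Ev p q f := by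
  have h : (Ev p' q).comp ((aeval (subX p) : S2 k →ₐ[k] S2 k) : S2 k →+* S2 k) = Ev p q := by
    apply MvPolynomial.ringHom_ext
    · intro r
      simp [Ev]
    · intro n
      cases n <;> simp [Ev, subX]
  exact RingHom.congr_fun h f

lemma Ev_evY (p q q' : Fin 2 → k) (f : S2 k) : Ev p q' (evY q f) = Ev p q f := by
  have h : (Ev p q').comp ((aeval (subY q) : S2 k →ₐ[k] S2 k) : S2 k →+* S2 k) = Ev p q := by
    apply MvPolynomial.ringHom_ext
    · intro r
      simp [Ev]
    · intro n
      cases n <;> simp [Ev, subY]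
  exact RingHom.congr_fun h f

lemma x_decomp (p : Fin 2 → k) (hp : p ≠ 0) {u v : ℕ} {f : S2 k}
    (hf : IsWeightedHomogeneous bw f (u, v)) (hu : 1 ≤ u) :
    ∃ hh : S2 k, IsWeightedHomogeneous bw hh (u - 1, v) ∧
      f = lamX p ^ u * evX p f + Lf p * hh := by
  have hsub : ∀ n, Ideal.Quotient.mk (Ideal.span {Lf p}) (sX p n)
      = Ideal.Quotient.mk _ (X n) := by
    intro n
    cases n with
    | inl i => exact (Ideal.Quotient.eq).mpr (sX_mem p hp i)
    | inr j => rfl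
  have h1 := mk_aeval_eq _ (sX p) hsub f
  rw [aeval_sX p hf] at h1
  have h2 : f - lamX p ^ u * evX p f ∈ Ideal.span {Lf p} := by
    have := (Ideal.Quotient.eq).mp h1
    have hneg := neg_mem this
    simpa using hneg
  obtain ⟨h0, hh0⟩ := Ideal.mem_span_singleton'.mp h2
  have hterm : IsWeightedHomogeneous bw (lamX p ^ u * evX p f) (u, v) := by
    have := (lamX_pow_hom p u).mul (evX_hom p hf)
    simpa using this
  have hdiff : IsWeightedHomogeneous bw (f - lamX p ^ u * evX p f) (u, v) :=
    hom_sub hf hterm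
  refine ⟨weightedHomogeneousComponent bw (u - 1, v) h0,
    weightedHomogeneousComponent_isWeightedHomogeneous (w := bw) (n := (u-1, v)) (φ := h0), ?_⟩
  have he : ((1:ℕ), (0:ℕ)) + (u - 1, v) = (u, v) := by
    rw [Prod.ext_iff]
    constructor
    · simp only [Prod.fst_add]
      omega
    · simp
  have hcm := hcomp_mul (Lf_hom p) h0 (u - 1, v)
  rw [he] at hcm
  rw [mul_comm] at hh0
  rw [hh0, hdiff.weightedHomogeneousComponent_same] at hcm
  -- hcm : f - lam^u evX f = Lf p * comp h0
  rw [← hcm]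
  ring

lemma y_decomp (q : Fin 2 → k) (hq : q ≠ 0) {u v : ℕ} {f : S2 k}
    (hf : IsWeightedHomogeneous bw f (u, v)) (hv : 1 ≤ v) :
    ∃ hh : S2 k, IsWeightedHomogeneous bw hh (u, v - 1) ∧
      f = muY q ^ v * evY q f + Mf q * hh := by
  have hsub : ∀ n, Ideal.Quotient.mk (Ideal.span {Mf q}) (sY q n)
      = Ideal.Quotient.mk _ (X n) := by
    intro n
    cases n with
    | inr j => exact (Ideal.Quotient.eq).mpr (sY_mem q hq j)
    | inl i => rfl
  have h1 := mk_aeval_eq _ (sY q) hsub f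
  rw [aeval_sY q hf] at h1
  have h2 : f - muY q ^ v * evY q f ∈ Ideal.span {Mf q} := by
    have := (Ideal.Quotient.eq).mp h1
    have hneg := neg_mem this
    simpa using hneg
  obtain ⟨h0, hh0⟩ := Ideal.mem_span_singleton'.mp h2
  have hterm : IsWeightedHomogeneous bw (muY q ^ v * evY q f) (u, v) := by
    have := (muY_pow_hom q v).mul (evY_hom q hf)
    simpa using this
  have hdiff : IsWeightedHomogeneous bw (f - muY q ^ v * evY q f) (u, v) :=
    hom_sub hf hterm
  refine ⟨weightedHomogeneousComponent bw (u, v - 1) h0,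
    weightedHomogeneousComponent_isWeightedHomogeneous (w := bw) (n := (u, v-1)) (φ := h0), ?_⟩
  have he : ((0:ℕ), (1:ℕ)) + (u, v - 1) = (u, v) := by
    rw [Prod.ext_iff]
    constructor
    · simp
    · simp only [Prod.snd_add]
      omega
  have hcm := hcomp_mul (Mf_hom q) h0 (u, v - 1)
  rw [he] at hcm
  rw [mul_comm] at hh0
  rw [hh0, hdiff.weightedHomogeneousComponent_same] at hcm
  rw [← hcm]
  ring

end

end Stmt16Aux
namespace Stmt16Aux

open MvPolynomial Finset

noncomputable section

variable {k : Type} [Field k]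

lemma y_div {q : Fin 2 → k} (hq : q ≠ 0) {v : ℕ} {f : S2 k}
    (hf : IsWeightedHomogeneous bw f ((0:ℕ), v)) (hv : 1 ≤ v)
    (p0 : Fin 2 → k) (h0 : Ev p0 q f = 0) :
    ∃ hh : S2 k, IsWeightedHomogeneous bw hh ((0:ℕ), v - 1) ∧ f = Mf q * hh := by
  obtain ⟨hh, hhom, heq⟩ := y_decomp q hq hf hv
  have hev : evY q f = 0 := by
    obtain ⟨c, hc⟩ := hom00_eq_C (evY_hom q hf)
    have hc0 : c = 0 := by
      have h1 : Ev p0 q (evY q f) = Ev p0 q f := Ev_evY p0 q q f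
      rw [hc, Ev_C, h0] at h1
      exact h1
    rw [hc, hc0, C_0]
  rw [hev, mul_zero, zero_add] at heq
  exact ⟨hh, hhom, heq⟩

lemma x_div {p : Fin 2 → k} (hp : p ≠ 0) {u : ℕ} {f : S2 k}
    (hf : IsWeightedHomogeneous bw f (u, (0:ℕ))) (hu : 1 ≤ u)
    (q0 : Fin 2 → k) (h0 : Ev p q0 f = 0) :
    ∃ hh : S2 k, IsWeightedHomogeneous bw hh (u - 1, (0:ℕ)) ∧ f = Lf p * hh := by
  obtain ⟨hh, hhom, heq⟩ := x_decomp p hp hf hu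
  have hev : evX p f = 0 := by
    obtain ⟨c, hc⟩ := hom00_eq_C (evX_hom p hf)
    have hc0 : c = 0 := by
      have h1 : Ev p q0 (evX p f) = Ev p q0 f := Ev_evX p q0 p f
      rw [hc, Ev_C, h0] at h1
      exact h1
    rw [hc, hc0, C_0]
  rw [hev, mul_zero, zero_add] at heq
  exact ⟨hh, hhom, heq⟩

lemma hom_eq_zero_of_van {f : S2 k} (hf : IsWeightedHomogeneous bw f ((0:ℕ),(0:ℕ)))
    {p0 q0 : Fin 2 → k} (h0 : Ev p0 q0 f = 0) : f = 0 := by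
  obtain ⟨c, hc⟩ := hom00_eq_C hf
  rw [hc] at h0 ⊢
  rw [Ev_C] at h0
  rw [h0, C_0]

lemma y_chain (n : ℕ) : ∀ (q : ℕ → Fin 2 → k), (∀ t, q t ≠ 0) →
    (∀ t t', t < t' → t' < n → det2 (q t) (q t') ≠ 0) →
    ∀ (v : ℕ) (f : S2 k), IsWeightedHomogeneous bw f ((0:ℕ), v) →
    (∀ t, t < n → Ev 0 (q t) f = 0) →
    ∃ g : S2 k, f = (∏ t ∈ Finset.range n, Mf (q t)) * g := by
  induction n with
  | zero => intro q _ _ v f _ _; exact ⟨f, by simp⟩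
  | succ n ih =>
      intro q hq0 hqd v f hf hvan
      by_cases hf0 : f = 0
      · exact ⟨0, by simp [hf0]⟩
      have hv : 1 ≤ v := by
        by_contra hcon
        push_neg at hcon
        have hv0 : v = 0 := by omega
        subst hv0
        exact hf0 (hom_eq_zero_of_van hf (hvan 0 (by omega)))
      obtain ⟨hh, hhom, heq⟩ := y_div (hq0 0) hf hv 0 (hvan 0 (by omega))
      have hvan' : ∀ t, t < n → Ev 0 (q (t+1)) hh = 0 := by
        intro t ht
        have hv2 := hvan (t+1) (by omega)
        rw [heq, map_mul, Ev_Mf] at hv2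
        have hd := hqd 0 (t+1) (by omega) (by omega)
        rcases mul_eq_zero.mp hv2 with h | h
        · exact absurd h hd
        · exact h
      obtain ⟨g, hg⟩ := ih (fun t => q (t+1)) (fun t => hq0 _)
        (fun t t' h1 h2 => hqd (t+1) (t'+1) (by omega) (by omega)) (v-1) hh hhom hvan'
      refine ⟨g, ?_⟩
      rw [Finset.prod_range_succ', heq, hg]
      ring

lemma y_deg (n : ℕ) : ∀ (q : ℕ → Fin 2 → k), (∀ t, q t ≠ 0) →
    (∀ t t', t < t' → t' < n → det2 (q t) (q t') ≠ 0) →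
    ∀ (v : ℕ) (f : S2 k), IsWeightedHomogeneous bw f ((0:ℕ), v) → f ≠ 0 →
    (∀ t, t < n → Ev 0 (q t) f = 0) → n ≤ v := by
  induction n with
  | zero => intros; omega
  | succ n ih =>
      intro q hq0 hqd v f hf hf0 hvan
      have hv : 1 ≤ v := by
        by_contra hcon
        push_neg at hcon
        have hv0 : v = 0 := by omega
        subst hv0
        exact hf0 (hom_eq_zero_of_van hf (hvan 0 (by omega)))
      obtain ⟨hh, hhom, heq⟩ := y_div (hq0 0) hf hv 0 (hvan 0 (by omega))
      have hh0 : hh ≠ 0 := by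
        rintro rfl
        rw [mul_zero] at heq
        exact hf0 heq
      have hvan' : ∀ t, t < n → Ev 0 (q (t+1)) hh = 0 := by
        intro t ht
        have hv2 := hvan (t+1) (by omega)
        rw [heq, map_mul, Ev_Mf] at hv2
        have hd := hqd 0 (t+1) (by omega) (by omega)
        rcases mul_eq_zero.mp hv2 with h | h
        · exact absurd h hd
        · exact h
      have := ih (fun t => q (t+1)) (fun t => hq0 _)
        (fun t t' h1 h2 => hqd (t+1) (t'+1) (by omega) (by omega)) (v-1) hh hhom hh0 hvan'
      omega

lemma x_deg (n : ℕ) : ∀ (p : ℕ → Fin 2 → k), (∀ t, p t ≠ 0) →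
    (∀ t t', t < t' → t' < n → det2 (p t) (p t') ≠ 0) →
    ∀ (u : ℕ) (f : S2 k), IsWeightedHomogeneous bw f (u, (0:ℕ)) → f ≠ 0 →
    (∀ t, t < n → Ev (p t) 0 f = 0) → n ≤ u := by
  induction n with
  | zero => intros; omega
  | succ n ih =>
      intro p hp0 hpd u f hf hf0 hvan
      have hu : 1 ≤ u := by
        by_contra hcon
        push_neg at hcon
        have hu0 : u = 0 := by omega
        subst hu0
        exact hf0 (hom_eq_zero_of_van hf (hvan 0 (by omega)))
      obtain ⟨hh, hhom, heq⟩ := x_div (hp0 0) hf hu 0 (hvan 0 (by omega))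
      have hh0 : hh ≠ 0 := by
        rintro rfl
        rw [mul_zero] at heq
        exact hf0 heq
      have hvan' : ∀ t, t < n → Ev (p (t+1)) 0 hh = 0 := by
        intro t ht
        have hv2 := hvan (t+1) (by omega)
        rw [heq, map_mul, Ev_Lf] at hv2
        have hd := hpd 0 (t+1) (by omega) (by omega)
        rcases mul_eq_zero.mp hv2 with h | h
        · exact absurd h hd
        · exact h
      have := ih (fun t => p (t+1)) (fun t => hp0 _)
        (fun t t' h1 h2 => hpd (t+1) (t'+1) (by omega) (by omega)) (u-1) hh hhom hh0 hvan'
      omega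

/-- Bezout on a row : if a bidegree (u,v) form vanishes at n points of a (1,0)-line but is
nonzero somewhere on the line, then n ≤ v. -/
lemma row_deg {u v : ℕ} {f : S2 k} (hf : IsWeightedHomogeneous bw f (u, v))
    (p0 : Fin 2 → k) (n : ℕ) (q : ℕ → Fin 2 → k) (hq0 : ∀ t, q t ≠ 0)
    (hqd : ∀ t t', t < t' → t' < n → det2 (q t) (q t') ≠ 0)
    (hvan : ∀ t, t < n → Ev p0 (q t) f = 0)
    (qq : Fin 2 → k) (hnz : Ev p0 qq f ≠ 0) : n ≤ v := by
  apply y_deg n q hq0 hqd v (evX p0 f) (evX_hom p0 hf)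
  · intro hzero
    apply hnz
    have := Ev_evX p0 qq 0 f
    rw [hzero] at this
    simpa using this.symm
  · intro t ht
    rw [Ev_evX p0 (q t) 0 f]
    exact hvan t ht

lemma col_deg {u v : ℕ} {f : S2 k} (hf : IsWeightedHomogeneous bw f (u, v))
    (q0 : Fin 2 → k) (n : ℕ) (p : ℕ → Fin 2 → k) (hp0 : ∀ t, p t ≠ 0)
    (hpd : ∀ t t', t < t' → t' < n → det2 (p t) (p t') ≠ 0)
    (hvan : ∀ t, t < n → Ev (p t) q0 f = 0)
    (pp : Fin 2 → k) (hnz : Ev pp q0 f ≠ 0) : n ≤ u := by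
  apply x_deg n p hp0 hpd u (evY q0 f) (evY_hom q0 hf)
  · intro hzero
    apply hnz
    have := Ev_evY pp q0 0 f
    rw [hzero] at this
    simpa using this.symm
  · intro t ht
    rw [Ev_evY (p t) q0 0 f]
    exact hvan t ht

end

end Stmt16Aux
namespace Stmt16Aux

open MvPolynomial Finset

noncomputable section

variable {k : Type} [Field k]

/-- The canonical staircase generators. -/
def genF (r : ℕ → ℕ) (p q : ℕ → Fin 2 → k) (t : ℕ) : S2 k :=
  (∏ i ∈ Finset.range t, Lf (p i)) * ∏ j ∈ Finset.range (r t), Mf (q j)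

lemma r_mono {a : ℕ} {r : ℕ → ℕ} (hr : ∀ i, i < a → r (i+1) ≤ r i) :
    ∀ i, i ≤ a → r i ≤ r 0 := by
  intro i
  induction i with
  | zero => intro _; exact le_rfl
  | succ n ihn =>
      intro hn
      exact le_trans (hr n (by omega)) (ihn (by omega))

lemma peel (a : ℕ) (p q : ℕ → Fin 2 → k) (r : ℕ → ℕ)
    (hp0 : ∀ i, p i ≠ 0) (hq0 : ∀ t, q t ≠ 0)
    (hpd : ∀ i', 0 < i' → i' ≤ a → det2 (p 0) (p i') ≠ 0)
    (hqd : ∀ t t', t < t' → t' < r 0 → det2 (q t) (q t') ≠ 0)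
    (hrm : ∀ i, i ≤ a → r i ≤ r 0)
    (u v : ℕ) (f : S2 k) (hf : IsWeightedHomogeneous bw f (u, v))
    (hvan : ∀ i, i ≤ a → ∀ j, j < r i → Ev (p i) (q j) f = 0) :
    ∃ (c h : S2 k), IsWeightedHomogeneous bw h (u-1, v) ∧
      f = c * ∏ j ∈ Finset.range (r 0), Mf (q j) + Lf (p 0) * h ∧
      (∀ i, 1 ≤ i → i ≤ a → ∀ j, j < r i → Ev (p i) (q j) h = 0) := by
  by_cases hu : 1 ≤ u
  · obtain ⟨h, hhom, heq⟩ := x_decomp (p 0) (hp0 0) hf hu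
    have hevan : ∀ j, j < r 0 → Ev 0 (q j) (evX (p 0) f) = 0 := by
      intro j hj
      rw [Ev_evX]
      exact hvan 0 (by omega) j hj
    obtain ⟨g, hg⟩ := y_chain (r 0) q hq0 hqd v (evX (p 0) f) (evX_hom (p 0) hf) hevan
    refine ⟨lamX (p 0) ^ u * g, h, hhom, ?_, ?_⟩
    · rw [heq, hg]; ring
    · intro i h1 h2 j hj
      have hv := hvan i h2 j hj
      rw [heq, map_add, map_mul, map_mul] at hv
      have hz : Ev (p i) (q j) (evX (p 0) f) = 0 := by
        rw [Ev_evX]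
        exact hvan 0 (by omega) j (lt_of_lt_of_le hj (hrm i h2))
      rw [hz, mul_zero, zero_add, Ev_Lf] at hv
      rcases mul_eq_zero.mp hv with hcon | hok
      · exact absurd hcon (hpd i h1 h2)
      · exact hok
  · push_neg at hu
    have hu0 : u = 0 := by omega
    subst hu0
    have hfx : evX (p 0) f = f := evX_of_deg0 (p 0) hf
    have hevan : ∀ j, j < r 0 → Ev 0 (q j) f = 0 := by
      intro j hj
      conv_lhs => rw [← hfx]
      rw [Ev_evX]
      exact hvan 0 (by omega) j hj
    obtain ⟨g, hg⟩ := y_chain (r 0) q hq0 hqd v f hf hevan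
    refine ⟨g, 0, ?_, ?_, ?_⟩
    · intro d hd
      simp at hd
    · rw [mul_zero, add_zero, hg]
      ring
    · intro _ _ _ _ _
      simp

lemma ferrers (a : ℕ) : ∀ (p q : ℕ → Fin 2 → k) (r : ℕ → ℕ),
    (∀ i, p i ≠ 0) → (∀ t, q t ≠ 0) →
    (∀ i i', i < i' → i' ≤ a → det2 (p i) (p i') ≠ 0) →
    (∀ t t', t < t' → t' < r 0 → det2 (q t) (q t') ≠ 0) →
    (∀ i, i < a → r (i+1) ≤ r i) → r (a+1) = 0 →
    ∀ (u v : ℕ) (f : S2 k), IsWeightedHomogeneous bw f (u, v) →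
    (∀ i, i ≤ a → ∀ j, j < r i → Ev (p i) (q j) f = 0) →
    f ∈ Ideal.span (genF r p q '' (Set.Iio (a+2))) := by
  induction a with
  | zero =>
      intro p q r hp0 hq0 hpd hqd hr hra u v f hf hvan
      obtain ⟨c, h, hhom, heq, _⟩ := peel 0 p q r hp0 hq0 (fun i' h1 h2 => hpd 0 i' h1 h2)
        hqd (fun i hi => by rw [Nat.le_zero.mp hi]) u v f hf hvan
      rw [heq]
      apply Ideal.add_mem
      · have hgen : genF r p q 0 = ∏ j ∈ Finset.range (r 0), Mf (q j) := by
          simp [genF]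
        rw [← hgen]
        exact Ideal.mul_mem_left _ c (Ideal.subset_span ⟨0, Set.mem_Iio.mpr (by omega), rfl⟩)
      · have hgen : genF r p q 1 = Lf (p 0) := by
          simp [genF, hra, Finset.prod_range_one]
        have hmem : genF r p q 1 ∈ Ideal.span (genF r p q '' (Set.Iio (0+2))) :=
          Ideal.subset_span ⟨1, Set.mem_Iio.mpr (by omega), rfl⟩
        rw [hgen] at hmem
        exact Ideal.mul_mem_right h _ hmem
  | succ a ih =>
      intro p q r hp0 hq0 hpd hqd hr hra u v f hf hvan
      have hrm : ∀ i, i ≤ a + 1 → r i ≤ r 0 := r_mono hr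
      obtain ⟨c, h, hhom, heq, hvanh⟩ := peel (a+1) p q r hp0 hq0
        (fun i' h1 h2 => hpd 0 i' h1 h2) hqd hrm u v f hf hvan
      rw [heq]
      apply Ideal.add_mem
      · have hgen : genF r p q 0 = ∏ j ∈ Finset.range (r 0), Mf (q j) := by
          simp [genF]
        rw [← hgen]
        exact Ideal.mul_mem_left _ c (Ideal.subset_span ⟨0, Set.mem_Iio.mpr (by omega), rfl⟩)
      · have hmemh : h ∈ Ideal.span
            (genF (fun i => r (i+1)) (fun i => p (i+1)) q '' (Set.Iio (a+2))) := by
          apply ih (fun i => p (i+1)) q (fun i => r (i+1)) (fun i => hp0 _) hq0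
          · intro i i' h1 h2
            exact hpd (i+1) (i'+1) (by omega) (by omega)
          · intro t t' h1 h2
            exact hqd t t' h1 (lt_of_lt_of_le h2 (hr 0 (by omega)))
          · intro i hi
            exact hr (i+1) (by omega)
          · exact hra
          · exact hhom
          · intro i hi j hj
            exact hvanh (i+1) (by omega) (by omega) j hj
        -- now multiply by Lf (p 0)
        have key : ∀ x ∈ Ideal.span
            (genF (fun i => r (i+1)) (fun i => p (i+1)) q '' (Set.Iio (a+2))),
            Lf (p 0) * x ∈ Ideal.span (genF r p q '' (Set.Iio (a+3))) := by
          intro x hx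
          induction hx using Submodule.span_induction with
          | mem g hg =>
              obtain ⟨t, ht, rfl⟩ := hg
              have hidx : (t : ℕ) + 1 ∈ Set.Iio (a+3) := by
                simp only [Set.mem_Iio] at ht ⊢
                omega
              have hval : Lf (p 0) * genF (fun i => r (i+1)) (fun i => p (i+1)) q t
                  = genF r p q (t+1) := by
                unfold genF
                rw [Finset.prod_range_succ']
                ring
              rw [hval]
              exact Ideal.subset_span ⟨t+1, hidx, rfl⟩
          | zero => rw [mul_zero]; exact Ideal.zero_mem _
          | add x y _ _ hx hy => rw [mul_add]; exact Ideal.add_mem _ hx hy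
          | smul a x _ hx =>
              rw [smul_eq_mul, mul_comm a x, ← mul_assoc]
              exact Ideal.mul_mem_right a _ hx
        exact key h hmemh

end

end Stmt16Aux
namespace Stmt16Aux

open MvPolynomial Finset

noncomputable section

variable {k : Type} [Field k]

lemma initial_seg {s : Finset ℕ} (hdc : ∀ x ∈ s, ∀ y, y ≤ x → y ∈ s) (x : ℕ) :
    x ∈ s ↔ x < s.card := by
  constructor
  · intro hx
    have hsub : Finset.range (x+1) ⊆ s := by
      intro y hy
      exact hdc x hx y (by simpa using Nat.lt_succ_iff.mp (Finset.mem_range.mp hy))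
    have := Finset.card_le_card hsub
    simpa using this
  · intro hx
    by_contra hxs
    have hsub : s ⊆ Finset.range x := by
      intro y hy
      rw [Finset.mem_range]
      by_contra hyx
      push_neg at hyx
      exact hxs (hdc y hy x hyx)
    have := Finset.card_le_card hsub
    simp at this
    omega

variable (T : Staircase k)

def pvec : ℕ → Fin 2 → k := fun i => (T.R i).rep

def qvec : ℕ → Fin 2 → k := fun j => (T.C j).rep

def rowS (i : ℕ) : Finset ℕ := (T.D.filter (fun z => z.1 = i)).image Prod.snd

def colS (j : ℕ) : Finset ℕ := (T.D.filter (fun z => z.2 = j)).image Prod.fst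

def rlen (i : ℕ) : ℕ := (rowS T i).card

def clen (j : ℕ) : ℕ := (colS T j).card

lemma mem_rowS {i j : ℕ} : j ∈ rowS T i ↔ (i, j) ∈ T.D := by
  unfold rowS
  rw [Finset.mem_image]
  constructor
  · rintro ⟨z, hz, rfl⟩
    rw [Finset.mem_filter] at hz
    have : z = (i, z.2) := by
      rw [← hz.2]
    rw [← this]
    exact hz.1
  · intro hij
    exact ⟨(i, j), Finset.mem_filter.mpr ⟨hij, rfl⟩, rfl⟩

lemma mem_colS {i j : ℕ} : i ∈ colS T j ↔ (i, j) ∈ T.D := by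
  unfold colS
  rw [Finset.mem_image]
  constructor
  · rintro ⟨z, hz, rfl⟩
    rw [Finset.mem_filter] at hz
    have : z = (z.1, j) := by
      rw [← hz.2]
    rw [← this]
    exact hz.1
  · intro hij
    exact ⟨(i, j), Finset.mem_filter.mpr ⟨hij, rfl⟩, rfl⟩

lemma mem_D_iff {i j : ℕ} : (i, j) ∈ T.D ↔ j < rlen T i := by
  rw [← mem_rowS]
  exact initial_seg (fun x hx y hy =>
    mem_rowS T |>.mpr (T.lower (i, x) (mem_rowS T |>.mp hx) (i, y) le_rfl hy)) j

lemma mem_D_iff_col {i j : ℕ} : (i, j) ∈ T.D ↔ i < clen T j := by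
  rw [← mem_colS]
  exact initial_seg (fun x hx y hy =>
    mem_colS T |>.mpr (T.lower (x, j) (mem_colS T |>.mp hx) (y, j) hy le_rfl)) i

lemma rowS_eq_range (i : ℕ) : rowS T i = Finset.range (rlen T i) := by
  ext j
  rw [mem_rowS, mem_D_iff, Finset.mem_range]

lemma colS_eq_range (j : ℕ) : colS T j = Finset.range (clen T j) := by
  ext i
  rw [mem_colS, mem_D_iff_col, Finset.mem_range]

lemma rlen_antitone {i i' : ℕ} (hii : i ≤ i') : rlen T i' ≤ rlen T i := by
  apply Finset.card_le_card
  intro j hj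
  rw [mem_rowS] at hj ⊢
  exact T.lower _ hj (i, j) hii le_rfl

lemma rlen_zero {i : ℕ} (hi : T.a < i) : rlen T i = 0 := by
  rw [rlen, Finset.card_eq_zero]
  ext j
  simp only [Finset.notMem_empty, iff_false]
  intro hj
  have := (T.bound _ (mem_rowS T |>.mp hj)).1
  omega

lemma D_le_a {i j : ℕ} (hij : (i, j) ∈ T.D) : i ≤ T.a := (T.bound _ hij).1

lemma D_le_b {i j : ℕ} (hij : (i, j) ∈ T.D) : j ≤ T.b := (T.bound _ hij).2

lemma pvec_nz (i : ℕ) : pvec T i ≠ 0 := (T.R i).rep_nonzero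

lemma qvec_nz (j : ℕ) : qvec T j ≠ 0 := (T.C j).rep_nonzero

lemma pvec_det {i i' : ℕ} (hi : i ≤ T.a) (hi' : i' ≤ T.a) (hne : i ≠ i') :
    det2 (pvec T i) (pvec T i') ≠ 0 := by
  apply det2_rep_ne
  intro hRR
  exact hne (T.hR i hi i' hi' hRR)

lemma qvec_det {j j' : ℕ} (hj : j ≤ T.b) (hj' : j' ≤ T.b) (hne : j ≠ j') :
    det2 (qvec T j) (qvec T j') ≠ 0 := by
  apply det2_rep_ne
  intro hCC
  exact hne (T.hC j hj j' hj' hCC)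

lemma prod_Lf_hom (p : ℕ → Fin 2 → k) (s : Finset ℕ) :
    IsWeightedHomogeneous bw (∏ i ∈ s, Lf (p i)) ((s.card : ℕ), (0:ℕ)) := by
  have := IsWeightedHomogeneous.prod s (fun i => Lf (p i)) (fun _ => ((1:ℕ), (0:ℕ)))
    (fun i _ => Lf_hom (p i))
  convert this using 1
  rw [Finset.sum_const]
  rw [Prod.ext_iff]
  constructor
  · rw [Prod.smul_fst]
    simp
  · rw [Prod.smul_snd]
    simp

lemma prod_Mf_hom (q : ℕ → Fin 2 → k) (s : Finset ℕ) :
    IsWeightedHomogeneous bw (∏ j ∈ s, Mf (q j)) ((0:ℕ), (s.card : ℕ)) := by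
  have := IsWeightedHomogeneous.prod s (fun j => Mf (q j)) (fun _ => ((0:ℕ), (1:ℕ)))
    (fun j _ => Mf_hom (q j))
  convert this using 1
  rw [Finset.sum_const]
  rw [Prod.ext_iff]
  constructor
  · rw [Prod.smul_fst]
    simp
  · rw [Prod.smul_snd]
    simp

lemma splits_LM (p q : ℕ → Fin 2 → k) (s t : Finset ℕ) :
    SplitsIntoLines ((∏ i ∈ s, Lf (p i)) * ∏ j ∈ t, Mf (q j)) := by
  refine ⟨s.val.map (fun i => Lf (p i)) + t.val.map (fun j => Mf (q j)), ?_, ?_⟩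
  · intro l hl
    rcases Multiset.mem_add.mp hl with hmem | hmem
    · obtain ⟨i, _, rfl⟩ := Multiset.mem_map.mp hmem
      exact Or.inl (Lf_hom (p i))
    · obtain ⟨j, _, rfl⟩ := Multiset.mem_map.mp hmem
      exact Or.inr (Mf_hom (q j))
  · rw [Multiset.prod_add]
    rfl

lemma prune : ∀ (n : ℕ) (G : Finset (S2 k)), G.card ≤ n →
    ∃ G' : Finset (S2 k), G' ⊆ G ∧
      Ideal.span (G' : Set (S2 k)) = Ideal.span (G : Set (S2 k)) ∧
      ∀ g ∈ G', g ∉ Ideal.span ((G'.erase g : Finset (S2 k)) : Set (S2 k)) := by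
  intro n
  induction n with
  | zero =>
      intro G hG
      have : G = ∅ := Finset.card_eq_zero.mp (by omega)
      subst this
      exact ⟨∅, Finset.Subset.refl _, rfl, by simp⟩
  | succ n ih =>
      intro G hG
      by_cases hbad : ∃ g ∈ G, g ∈ Ideal.span ((G.erase g : Finset (S2 k)) : Set (S2 k))
      · obtain ⟨g, hgG, hg⟩ := hbad
        have hspan : Ideal.span ((G.erase g : Finset (S2 k)) : Set (S2 k))
            = Ideal.span (G : Set (S2 k)) := by
          apply le_antisymm
          · exact Ideal.span_mono (Finset.coe_subset.mpr (Finset.erase_subset g G))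
          · rw [Ideal.span_le]
            intro x hxG
            rw [Finset.mem_coe] at hxG
            by_cases hxg : x = g
            · subst hxg
              exact hg
            · exact Ideal.subset_span (Finset.mem_coe.mpr (Finset.mem_erase.mpr ⟨hxg, hxG⟩))
        obtain ⟨G', hsub, hspan', hmin⟩ := ih (G.erase g)
          (by have := Finset.card_erase_lt_of_mem hgG; omega)
        exact ⟨G', hsub.trans (Finset.erase_subset g G), hspan'.trans hspan, hmin⟩
      · push_neg at hbad
        exact ⟨G, Finset.Subset.refl G, rfl, hbad⟩

end

end Stmt16Aux
namespace Stmt16Aux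

open MvPolynomial Finset

noncomputable section

variable {k : Type} [Field k]

variable (T : Staircase k)

lemma Lf_mem_pointIdeal (i j : ℕ) :
    Lf (pvec T i) ∈ pointIdeal ((T.R i, T.C j) : PtQ k) := by
  apply Ideal.subset_span
  refine ⟨⟨((1:ℕ), (0:ℕ)), Lf_hom _⟩, ?_⟩
  show Ev (pvec T i) (qvec T j) (Lf (pvec T i)) = 0
  rw [Ev_Lf, det2_self]

lemma Mf_mem_pointIdeal (i j : ℕ) :
    Mf (qvec T j) ∈ pointIdeal ((T.R i, T.C j) : PtQ k) := by
  apply Ideal.subset_span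
  refine ⟨⟨((0:ℕ), (1:ℕ)), Mf_hom _⟩, ?_⟩
  show Ev (pvec T i) (qvec T j) (Mf (qvec T j)) = 0
  rw [Ev_Mf, det2_self]

lemma gen_fer_mem (t : ℕ) {i j : ℕ} (hij : (i, j) ∈ T.D) :
    genF (rlen T) (pvec T) (qvec T) t ∈ pointIdeal ((T.R i, T.C j) : PtQ k) := by
  unfold genF
  by_cases hit : i < t
  · have h1 : (∏ i' ∈ Finset.range t, Lf (pvec T i'))
        ∈ pointIdeal ((T.R i, T.C j) : PtQ k) := by
      rw [← Finset.mul_prod_erase _ _ (Finset.mem_range.mpr hit)]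
      exact Ideal.mul_mem_right _ _ (Lf_mem_pointIdeal T i j)
    exact Ideal.mul_mem_right _ _ h1
  · push_neg at hit
    have hjr : j < rlen T t :=
      lt_of_lt_of_le ((mem_D_iff T).mp hij) (rlen_antitone T hit)
    have h2 : (∏ j' ∈ Finset.range (rlen T t), Mf (qvec T j'))
        ∈ pointIdeal ((T.R i, T.C j) : PtQ k) := by
      rw [← Finset.mul_prod_erase _ _ (Finset.mem_range.mpr hjr)]
      exact Ideal.mul_mem_right _ _ (Mf_mem_pointIdeal T i j)
    exact Ideal.mul_mem_left _ _ h2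

variable {h : ℕ} (pt : Fin h → ℕ × ℕ)

/-- The separator: product of all lines through the grid except those through `pt l`. -/
def Fsep (l : Fin h) : S2 k :=
  (∏ i' ∈ (colS T (pt l).2).erase (pt l).1, Lf (pvec T i')) *
    ∏ j' ∈ (rowS T (pt l).1).erase (pt l).2, Mf (qvec T j')

/-- Case analysis: any point of the grid other than `pt l` lies on one of the lines of `Fsep`. -/
lemma Fsep_cover (l : Fin h) {i' j' : ℕ} (hij : (i', j') ∈ T.D)
    (hne : (i', j') ≠ pt l) (hptD : pt l ∈ T.D) :
    j' ∈ (rowS T (pt l).1).erase (pt l).2 ∨ i' ∈ (colS T (pt l).2).erase (pt l).1 := by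
  set i := (pt l).1 with hi
  set j := (pt l).2 with hj
  have hptD' : (i, j) ∈ T.D := hptD
  by_cases hrow : j' ∈ (rowS T i).erase j
  · exact Or.inl hrow
  · right
    rw [Finset.mem_erase, mem_colS]
    by_cases hjj : j' = j
    · subst hjj
      refine ⟨?_, hij⟩
      intro hii
      apply hne
      rw [hii]
    · have hnr : (i, j') ∉ T.D := by
        intro hmem
        exact hrow (Finset.mem_erase.mpr ⟨hjj, (mem_rowS T).mpr hmem⟩)
      have h1 : rlen T i ≤ j' := by
        by_contra hcon
        push_neg at hcon
        exact hnr ((mem_D_iff T).mpr hcon)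
      have hjlt : j < rlen T i := (mem_D_iff T).mp hptD'
      have hj'lt : j' < rlen T i' := (mem_D_iff T).mp hij
      refine ⟨?_, (mem_D_iff T).mpr (by omega)⟩
      intro hii
      subst hii
      omega

lemma Fsep_mem (l : Fin h) {i' j' : ℕ} (hij : (i', j') ∈ T.D)
    (hne : (i', j') ≠ pt l) (hptD : pt l ∈ T.D) :
    Fsep T pt l ∈ pointIdeal ((T.R i', T.C j') : PtQ k) := by
  rcases Fsep_cover T pt l hij hne hptD with hcase | hcase
  · have h2 : (∏ j'' ∈ (rowS T (pt l).1).erase (pt l).2, Mf (qvec T j''))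
        ∈ pointIdeal ((T.R i', T.C j') : PtQ k) := by
      rw [← Finset.mul_prod_erase _ _ hcase]
      exact Ideal.mul_mem_right _ _ (Mf_mem_pointIdeal T i' j')
    exact Ideal.mul_mem_left _ _ h2
  · have h1 : (∏ i'' ∈ (colS T (pt l).2).erase (pt l).1, Lf (pvec T i''))
        ∈ pointIdeal ((T.R i', T.C j') : PtQ k) := by
      rw [← Finset.mul_prod_erase _ _ hcase]
      exact Ideal.mul_mem_right _ _ (Lf_mem_pointIdeal T i' j')
    exact Ideal.mul_mem_right _ _ h1

lemma Fsep_hom (l : Fin h) (hptD : pt l ∈ T.D) :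
    IsWeightedHomogeneous bw (Fsep T pt l)
      (clen T (pt l).2 - 1, rlen T (pt l).1 - 1) := by
  have hc : ((colS T (pt l).2).erase (pt l).1).card = clen T (pt l).2 - 1 := by
    rw [Finset.card_erase_of_mem ((mem_colS T).mpr hptD)]
    rfl
  have hr : ((rowS T (pt l).1).erase (pt l).2).card = rlen T (pt l).1 - 1 := by
    rw [Finset.card_erase_of_mem ((mem_rowS T).mpr hptD)]
    rfl
  have := (prod_Lf_hom (pvec T) ((colS T (pt l).2).erase (pt l).1)).mul
    (prod_Mf_hom (qvec T) ((rowS T (pt l).1).erase (pt l).2))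
  rw [hc, hr] at this
  simpa [Fsep] using this

lemma Fsep_ne_zero (l : Fin h) (hptD : pt l ∈ T.D) :
    Ev (pvec T (pt l).1) (qvec T (pt l).2) (Fsep T pt l) ≠ 0 := by
  set i := (pt l).1
  set j := (pt l).2
  have hia : i ≤ T.a := D_le_a T hptD
  have hjb : j ≤ T.b := D_le_b T hptD
  rw [Fsep, map_mul, map_prod, map_prod]
  apply mul_ne_zero
  · rw [Finset.prod_ne_zero_iff]
    intro i'' hi''
    rw [Finset.mem_erase] at hi''
    rw [Ev_Lf]
    exact pvec_det T (D_le_a T ((mem_colS T).mp hi''.2)) hia hi''.1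
  · rw [Finset.prod_ne_zero_iff]
    intro j'' hj''
    rw [Finset.mem_erase] at hj''
    rw [Ev_Mf]
    exact qvec_det T (D_le_b T ((mem_rowS T).mp hj''.2)) hjb hj''.1

lemma Fsep_vanish (l : Fin h) {i' j' : ℕ} (hij : (i', j') ∈ T.D)
    (hne : (i', j') ≠ pt l) (hptD : pt l ∈ T.D) :
    Ev (pvec T i') (qvec T j') (Fsep T pt l) = 0 := by
  rw [Fsep, map_mul, map_prod, map_prod]
  rcases Fsep_cover T pt l hij hne hptD with hcase | hcase
  · apply mul_eq_zero_of_right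
    apply Finset.prod_eq_zero hcase
    rw [Ev_Mf, det2_self]
  · apply mul_eq_zero_of_left
    apply Finset.prod_eq_zero hcase
    rw [Ev_Lf, det2_self]

end

end Stmt16Aux

open Stmt16Aux

/-- I_Z admits a minimal generating set consisting of products of forms of
degree (1,0) and (0,1), i.e. curves which are unions of (1,0)- and (0,1)-lines. -/
theorem stmt16 (k : Type) [Field k] [IsAlgClosed k] (T : Staircase k)
    (h : ℕ) (pt : Fin h → ℕ × ℕ)
    (hmem : ∀ l, T.Interior (pt l).1 (pt l).2)
    (hrow : ∀ l l', (pt l).1 = (pt l').1 → l = l')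
    (hcol : ∀ l l', (pt l).2 = (pt l').2 → l = l') :
    ∃ G : Finset (S2 k),
      Ideal.span (G : Set (S2 k)) = T.residual (Finset.univ.image pt) ∧
      (∀ g ∈ G, g ∉ Ideal.span ((G.erase g : Finset (S2 k)) : Set (S2 k))) ∧
      (∀ g ∈ G, SplitsIntoLines g) := by
  classical
  set p : ℕ → Fin 2 → k := pvec T with hpdef
  set q : ℕ → Fin 2 → k := qvec T with hqdef
  set r : ℕ → ℕ := rlen T with hrdef
  set E : Finset (ℕ × ℕ) := Finset.univ.image pt with hE
  set G : Finset (S2 k) :=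
    ((Finset.range (T.a + 2)).image (genF r p q)) ∪ (Finset.univ.image (Fsep T pt)) with hGdef
  have hptD : ∀ l : Fin h, pt l ∈ T.D := fun l => (hmem l).1
  have hres : ∀ f : S2 k, f ∈ T.residual E ↔
      ∀ z ∈ T.D \ E, f ∈ pointIdeal ((T.R z.1, T.C z.2) : PtQ k) := by
    intro f
    unfold Staircase.residual idealOfFinset
    constructor
    · intro hf z hz
      rw [Submodule.mem_iInf] at hf
      have h2 := hf (T.R z.1, T.C z.2)
      rw [Submodule.mem_iInf] at h2
      exact h2 (Finset.mem_image.mpr ⟨z, hz, rfl⟩)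
    · intro hf
      rw [Submodule.mem_iInf]
      intro x
      rw [Submodule.mem_iInf]
      intro hx
      obtain ⟨z, hz, rfl⟩ := Finset.mem_image.mp hx
      exact hf z hz
  -- Direction 1 : span G ≤ residual
  have hsub1 : Ideal.span (G : Set (S2 k)) ≤ T.residual E := by
    rw [Ideal.span_le]
    intro g hg
    rw [Finset.mem_coe, hGdef, Finset.mem_union] at hg
    rw [SetLike.mem_coe, hres]
    intro z hz
    rw [Finset.mem_sdiff] at hz
    rcases hg with hg | hg
    · obtain ⟨t, _, rfl⟩ := Finset.mem_image.mp hg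
      exact gen_fer_mem T t hz.1
    · obtain ⟨l, _, rfl⟩ := Finset.mem_image.mp hg
      apply Fsep_mem T pt l hz.1 ?_ (hptD l)
      intro hcon
      apply hz.2
      rw [hE]
      exact Finset.mem_image.mpr ⟨l, Finset.mem_univ l, hcon.symm⟩
  have hpd : ∀ i i', i < i' → i' ≤ T.a → det2 (p i) (p i') ≠ 0 :=
    fun i i' h1 h2 => pvec_det T (by omega) h2 (by omega)
  -- the master claim, by induction on the number of removed points
  have master : ∀ (m : ℕ), m ≤ h → ∀ (u v : ℕ) (f : S2 k),
      IsWeightedHomogeneous bw f (u, v) →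
      (∀ i j : ℕ, (i, j) ∈ T.D → (∀ l : Fin h, (l : ℕ) < m → pt l ≠ (i, j)) →
        Ev (p i) (q j) f = 0) →
      f ∈ Ideal.span (G : Set (S2 k)) := by
    intro m
    induction m with
    | zero =>
        intro _ u v f hfhom hvan
        have hferr := ferrers T.a p q r (fun i => pvec_nz T i) (fun j => qvec_nz T j) hpd
          (fun t t' h1 h2 => qvec_det T
            (by have := D_le_b T ((mem_D_iff T).mpr h2); omega)
            (D_le_b T ((mem_D_iff T).mpr h2)) (by omega))
          (fun i _ => rlen_antitone T (by omega)) (rlen_zero T (by omega)) u v f hfhom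
          (fun i _ j hj => hvan i j ((mem_D_iff T).mpr hj)
            (fun l hl => absurd hl (Nat.not_lt_zero _)))
        refine Ideal.span_le.mpr ?_ hferr
        intro x hx
        obtain ⟨t, ht, rfl⟩ := hx
        refine SetLike.mem_coe.mpr (Ideal.subset_span ?_)
        rw [hGdef]
        exact Finset.mem_coe.mpr (Finset.mem_union_left _
          (Finset.mem_image.mpr ⟨t, Finset.mem_range.mpr (Set.mem_Iio.mp ht), rfl⟩))
    | succ m ih =>
        intro hm1 u v f hfhom hvan
        have hmh : m < h := by omega
        set l0 : Fin h := ⟨m, hmh⟩ with hl0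
        have hijD : ((pt l0).1, (pt l0).2) ∈ T.D := hptD l0
        by_cases h0 : Ev (p (pt l0).1) (q (pt l0).2) f = 0
        · apply ih (by omega) u v f hfhom
          intro i' j' hij' hnr
          by_cases he : pt l0 = (i', j')
          · have h1 : (pt l0).1 = i' := congrArg Prod.fst he
            have h2 : (pt l0).2 = j' := congrArg Prod.snd he
            rw [← h1, ← h2]
            exact h0
          · apply hvan i' j' hij'
            intro l hl
            by_cases hlm : (l : ℕ) < m
            · exact hnr l hlm
            · have hlv : (l : ℕ) = m := by omega
              have hleq : l = l0 := by
                apply Fin.ext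
                rw [hlv, hl0]
            
              rw [hleq]
              exact he
        · set i := (pt l0).1 with hidef
          set j := (pt l0).2 with hjdef
          have hia : i ≤ T.a := D_le_a T hijD
          have hjb : j ≤ T.b := D_le_b T hijD
          have hjr : j < r i := (mem_D_iff T).mp hijD
          have hic : i < clen T j := (mem_D_iff_col T).mp hijD
          have hnotrem_row : ∀ j'', j'' ≠ j → ∀ l : Fin h, pt l ≠ (i, j'') := by
            intro j'' hne l hcon
            have h1 : (pt l).1 = (pt l0).1 := by rw [hcon, ← hidef]
            have hleq : l = l0 := hrow l l0 h1
            rw [hleq] at hcon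
            have h2 : (pt l0).2 = j'' := congrArg Prod.snd hcon
            rw [← hjdef] at h2
            exact hne h2.symm
          have hnotrem_col : ∀ i'', i'' ≠ i → ∀ l : Fin h, pt l ≠ (i'', j) := by
            intro i'' hne l hcon
            have h1 : (pt l).2 = (pt l0).2 := by rw [hcon, ← hjdef]
            have hleq : l = l0 := hcol l l0 h1
            rw [hleq] at hcon
            have h2 : (pt l0).1 = i'' := congrArg Prod.fst hcon
            rw [← hidef] at h2
            exact hne h2.symm
          -- Bezout counting on the row through the removed point
          have hrow_deg : r i - 1 ≤ v := by
            apply row_deg hfhom (p i) (r i - 1) (fun t => q (if t < j then t else t + 1))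
              (fun t => qvec_nz T _) ?_ ?_ (q j) h0
            · intro t t' h1 h2
              have hst : (if t < j then t else t + 1) < r i := by split_ifs <;> omega
              have hst' : (if t' < j then t' else t' + 1) < r i := by split_ifs <;> omega
              have hb1 : (if t < j then t else t + 1) ≤ T.b := D_le_b T ((mem_D_iff T).mpr hst)
              have hb2 : (if t' < j then t' else t' + 1) ≤ T.b := D_le_b T ((mem_D_iff T).mpr hst')
              apply qvec_det T hb1 hb2
              split_ifs <;> omega
            · intro t ht
              have hst : (if t < j then t else t + 1) < r i := by split_ifs <;> omega
              have hstne : (if t < j then t else t + 1) ≠ j := by split_ifs <;> omega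
              exact hvan i _ ((mem_D_iff T).mpr hst)
                (fun l _ => hnotrem_row _ hstne l)
          -- Bezout counting on the column through the removed point
          have hcol_deg : clen T j - 1 ≤ u := by
            apply col_deg hfhom (q j) (clen T j - 1) (fun t => p (if t < i then t else t + 1))
              (fun t => pvec_nz T _) ?_ ?_ (p i) h0
            · intro t t' h1 h2
              have hst : (if t < i then t else t + 1) < clen T j := by split_ifs <;> omega
              have hst' : (if t' < i then t' else t' + 1) < clen T j := by split_ifs <;> omega
              have hb1 : (if t < i then t else t + 1) ≤ T.a :=
                D_le_a T ((mem_D_iff_col T).mpr hst)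
              have hb2 : (if t' < i then t' else t' + 1) ≤ T.a :=
                D_le_a T ((mem_D_iff_col T).mpr hst')
              apply pvec_det T hb1 hb2
              split_ifs <;> omega
            · intro t ht
              have hst : (if t < i then t else t + 1) < clen T j := by split_ifs <;> omega
              have hstne : (if t < i then t else t + 1) ≠ i := by split_ifs <;> omega
              exact hvan _ j ((mem_D_iff_col T).mpr hst)
                (fun l _ => hnotrem_col _ hstne l)
          set F := Fsep T pt l0 with hFdef
          have hFhom : IsWeightedHomogeneous bw F (clen T j - 1, r i - 1) :=
            Fsep_hom T pt l0 hijD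
          have hwF : Ev (p i) (q j) F ≠ 0 := Fsep_ne_zero T pt l0 hijD
          set e := Ev (p i) (q j) f * (Ev (p i) (q j) F)⁻¹ with hedef
          set pad := C e * (lamX (p i) ^ (u - (clen T j - 1)) *
            (muY (q j) ^ (v - (r i - 1)) * F)) with hpaddef
          have hpadhom : IsWeightedHomogeneous bw pad (u, v) := by
            have h1 := (isWeightedHomogeneous_C bw e).mul
              ((lamX_pow_hom (p i) (u - (clen T j - 1))).mul
                ((muY_pow_hom (q j) (v - (r i - 1))).mul hFhom))
            have hdeg : ((0 : ℕ × ℕ)) + ((u - (clen T j - 1), (0:ℕ)) +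
                (((0:ℕ), v - (r i - 1)) + (clen T j - 1, r i - 1))) = ((u : ℕ), (v : ℕ)) := by
              rw [Prod.ext_iff]
              constructor
              · simp only [Prod.fst_add]
                simp
                omega
              · simp only [Prod.snd_add]
                simp
                omega
            rw [hdeg] at h1
            exact h1
          have hpadval : Ev (p i) (q j) pad = Ev (p i) (q j) f := by
            rw [hpaddef]
            simp only [map_mul, map_pow, Ev_C, Ev_lamX (p := p i) (pvec_nz T i), Ev_muY (q := q j) (qvec_nz T j),
              one_pow, one_mul]
            exact inv_mul_cancel_right₀ hwF _
          have hsubf : f - pad ∈ Ideal.span (G : Set (S2 k)) := by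
            apply ih (by omega) u v _ (hom_sub hfhom hpadhom)
            intro i' j' hij' hnr
            rw [map_sub]
            by_cases hcase : pt l0 = (i', j')
            · have h1 : i = i' := by rw [hidef, hcase]
              have h2 : j = j' := by rw [hjdef, hcase]
              rw [← h1, ← h2, hpadval, sub_self]
            · have hf0 : Ev (p i') (q j') f = 0 := by
                apply hvan i' j' hij'
                intro l hl
                by_cases hlm : (l : ℕ) < m
                · exact hnr l hlm
                · have hlv : (l : ℕ) = m := by omega
                  have hleq : l = l0 := by
                    apply Fin.ext
                    rw [hlv, hl0]
                  rw [hleq]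
                  exact hcase
              have hFz : Ev (p i') (q j') F = 0 :=
                Fsep_vanish T pt l0 hij' (fun hcon => hcase hcon.symm) hijD
              rw [hf0, hpaddef]
              simp only [map_mul, map_pow]
              rw [hFz]
              simp
          have hFG : F ∈ Ideal.span (G : Set (S2 k)) := by
            apply Ideal.subset_span
            rw [hGdef]
            exact Finset.mem_coe.mpr (Finset.mem_union_right _
              (Finset.mem_image.mpr ⟨l0, Finset.mem_univ _, rfl⟩))
          have hfinal : f = (f - pad) + (C e * (lamX (p i) ^ (u - (clen T j - 1)) *
              muY (q j) ^ (v - (r i - 1)))) * F := by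
            rw [hpaddef]
            ring
          rw [hfinal]
          exact Ideal.add_mem _ hsubf (Ideal.mul_mem_left _ _ hFG)
  -- Direction 2 : residual ≤ span G
  have hsub2 : T.residual E ≤ Ideal.span (G : Set (S2 k)) := by
    intro f hf
    rw [comp_decompose f]
    apply Ideal.sum_mem
    intro d _
    apply master h le_rfl d.1 d.2 _
      (weightedHomogeneousComponent_isWeightedHomogeneous (w := bw) (n := d) (φ := f))
    intro i j hij hnr
    have hnE : (i, j) ∉ E := by
      intro hcon
      rw [hE] at hcon
      obtain ⟨l, _, hl⟩ := Finset.mem_image.mp hcon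
      exact hnr l l.isLt hl
    have hfx : f ∈ pointIdeal ((T.R i, T.C j) : PtQ k) :=
      (hres f).mp hf (i, j) (Finset.mem_sdiff.mpr ⟨hij, hnE⟩)
    exact pointIdeal_comp_vanish hfx d
  have hspan : Ideal.span (G : Set (S2 k)) = T.residual E := le_antisymm hsub1 hsub2
  have hsplits : ∀ g ∈ G, SplitsIntoLines g := by
    intro g hg
    rw [hGdef, Finset.mem_union] at hg
    rcases hg with hg | hg
    · obtain ⟨t, _, rfl⟩ := Finset.mem_image.mp hg
      exact splits_LM p q (Finset.range t) (Finset.range (r t))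
    · obtain ⟨l, _, rfl⟩ := Finset.mem_image.mp hg
      exact splits_LM (pvec T) (qvec T) _ _
  obtain ⟨G', hsubG, hspanG, hmin⟩ := prune G.card G le_rfl
  exact ⟨G', hspanG.trans hspan, hmin, fun g hg => hsplits g (hsubG hg)⟩
end

section
/- Let X ⊂ P^1 × P^1 be a zero-dimensional complete intersection, i.e., I_X is generated by two bihomogeneous forms forming a regular sequence. Then the two forms have bidegrees (a,0) and (0,b) for some a, b > 0; equivalently, X is the intersection of a curve of type (a,0) with a curve of type (0,b). -/
/- Common setup: the bigraded coordinate ring of Q = P^1 x P^1, bigraded Hilbert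
functions, point ideals, separators, minimal free resolutions, staircase (Ferrers)
configurations of reduced ACM schemes. -/

open MvPolynomial

attribute [local instance] Classical.propDecidable

/- ===== Auxiliary lemmas for stmt17 ===== -/

noncomputable section StmtAux

variable {k : Type} [Field k]

open Finsupp in
lemma stmt17_weight_fst (μ : BiVar →₀ ℕ) :
    ((Finsupp.weight bw) μ).1 = ∑ s ∈ μ.support, μ s * (bw s).1 := by
  rw [Finsupp.weight_apply, Finsupp.sum, Prod.fst_sum]
  refine Finset.sum_congr rfl fun s _ => ?_
  simp [Prod.smul_fst]

open Finsupp in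
lemma stmt17_weight_snd (μ : BiVar →₀ ℕ) :
    ((Finsupp.weight bw) μ).2 = ∑ s ∈ μ.support, μ s * (bw s).2 := by
  rw [Finsupp.weight_apply, Finsupp.sum, Prod.snd_sum]
  refine Finset.sum_congr rfl fun s _ => ?_
  simp [Prod.smul_snd]

lemma stmt17_weight_proj1 (μ : BiVar →₀ ℕ) :
    (Finsupp.weight (fun s => (bw s).1)) μ = ((Finsupp.weight bw) μ).1 := by
  rw [stmt17_weight_fst, Finsupp.weight_apply, Finsupp.sum]
  exact Finset.sum_congr rfl fun s _ => by simp [mul_comm]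

lemma stmt17_weight_proj2 (μ : BiVar →₀ ℕ) :
    (Finsupp.weight (fun s => (bw s).2)) μ = ((Finsupp.weight bw) μ).2 := by
  rw [stmt17_weight_snd, Finsupp.weight_apply, Finsupp.sum]
  exact Finset.sum_congr rfl fun s _ => by simp [mul_comm]

/-- If `f` is weighted homogeneous of degree `m`, then each weighted homogeneous
component of `monomial μ c * f` is either the whole product or `0`. -/
lemma stmt17_comp_monomial_mul {σ M R : Type*} [CommRing R] [AddCommMonoid M]
    (w : σ → M) {f : MvPolynomial σ R} {m : M} (hf : IsWeightedHomogeneous w f m)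
    (μ : σ →₀ ℕ) (c : R) (d : M) :
    weightedHomogeneousComponent w d (monomial μ c * f) =
      if Finsupp.weight w μ + m = d then monomial μ c * f else 0 := by
  classical
  have key : ∀ ν : σ →₀ ℕ, coeff ν (monomial μ c * f) ≠ 0 →
      Finsupp.weight w ν = Finsupp.weight w μ + m := by
    intro ν hν
    rw [coeff_monomial_mul'] at hν
    have h3 : μ ≤ ν := by
      by_contra h3
      rw [if_neg h3] at hν; exact hν rfl
    rw [if_pos h3] at hν
    have h4 : coeff (ν - μ) f ≠ 0 := right_ne_zero_of_mul hν
    have h5 := hf h4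
    calc Finsupp.weight w ν = Finsupp.weight w (μ + (ν - μ)) := by
          rw [add_tsub_cancel_of_le h3]
      _ = Finsupp.weight w μ + Finsupp.weight w (ν - μ) := map_add _ _ _
      _ = Finsupp.weight w μ + m := by rw [h5]
  ext ν
  rw [coeff_weightedHomogeneousComponent]
  by_cases h2 : Finsupp.weight w μ + m = d
  · rw [if_pos h2]
    by_cases h1 : Finsupp.weight w ν = d
    · rw [if_pos h1]
    · rw [if_neg h1]
      rcases eq_or_ne (coeff ν (monomial μ c * f)) 0 with h | h
      · exact h.symm
      · exact absurd ((key ν h).trans h2) h1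
  · rw [if_neg h2, coeff_zero]
    by_cases h1 : Finsupp.weight w ν = d
    · rw [if_pos h1]
      rcases eq_or_ne (coeff ν (monomial μ c * f)) 0 with h | h
      · exact h
      · exact absurd ((key ν h).symm.trans h1) h2
    · rw [if_neg h1]

/-- Each weighted homogeneous component of a multiple of a weighted homogeneous `f`
is again a multiple of `f`. -/
lemma stmt17_comp_mul {σ M R : Type*} [CommRing R] [AddCommMonoid M]
    (w : σ → M) {f : MvPolynomial σ R} {m : M} (hf : IsWeightedHomogeneous w f m)
    (p : MvPolynomial σ R) (d : M) :
    ∃ p', weightedHomogeneousComponent w d (p * f) = p' * f := by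
  classical
  have hpf : p * f = ∑ μ ∈ p.support, monomial μ (coeff μ p) * f := by
    rw [← Finset.sum_mul, support_sum_monomial_coeff]
  refine ⟨∑ μ ∈ p.support,
    if Finsupp.weight w μ + m = d then monomial μ (coeff μ p) else 0, ?_⟩
  rw [hpf, map_sum, Finset.sum_mul]
  refine Finset.sum_congr rfl fun μ _ => ?_
  rw [stmt17_comp_monomial_mul w hf]
  split_ifs with h
  · rfl
  · rw [zero_mul]

/-- Evaluation of a bihomogeneous polynomial at a scaled point. -/
lemma stmt17_eval_scale {m n : ℕ} {f : S2 k} (hf : IsWeightedHomogeneous bw f (m, n))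
    (u w : Fin 2 → k) (c d : k) :
    MvPolynomial.eval (Sum.elim (c • u) (d • w)) f
      = c ^ m * d ^ n * MvPolynomial.eval (Sum.elim u w) f := by
  conv_lhs => rw [← support_sum_monomial_coeff f]
  conv_rhs => rw [← support_sum_monomial_coeff f]
  rw [map_sum, map_sum, Finset.mul_sum]
  refine Finset.sum_congr rfl fun μ hμ => ?_
  rw [eval_monomial, eval_monomial]
  have hw := hf (mem_support_iff.mp hμ)
  have hm : ∑ s ∈ μ.support, μ s * (bw s).1 = m := by
    rw [← stmt17_weight_fst, hw]
  have hn : ∑ s ∈ μ.support, μ s * (bw s).2 = n := by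
    rw [← stmt17_weight_snd, hw]
  have hprod : (μ.prod fun s e => Sum.elim (c • u) (d • w) s ^ e)
      = c ^ m * d ^ n * μ.prod fun s e => Sum.elim u w s ^ e := by
    rw [Finsupp.prod, Finsupp.prod]
    have h1 : ∀ s ∈ μ.support, Sum.elim (c • u) (d • w) s ^ μ s
        = (c ^ (μ s * (bw s).1) * d ^ (μ s * (bw s).2)) * Sum.elim u w s ^ μ s := by
      intro s _
      cases s with
      | inl i =>
        have hbw : bw (Sum.inl i) = ((1 : ℕ), (0 : ℕ)) := rfl
        simp only [Sum.elim_inl, Pi.smul_apply, smul_eq_mul, mul_pow, hbw,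
          Nat.mul_one, Nat.mul_zero, pow_zero, mul_one, one_mul]
        try ring
      | inr j =>
        have hbw : bw (Sum.inr j) = ((0 : ℕ), (1 : ℕ)) := rfl
        simp only [Sum.elim_inr, Pi.smul_apply, smul_eq_mul, mul_pow, hbw,
          Nat.mul_one, Nat.mul_zero, pow_zero, mul_one, one_mul]
        try ring
    rw [Finset.prod_congr rfl h1, Finset.prod_mul_distrib, Finset.prod_mul_distrib,
      Finset.prod_pow_eq_pow_sum, Finset.prod_pow_eq_pow_sum, hm, hn]
  rw [hprod]
  ring

/-- Membership of a point in the bihomogeneous zero locus of `span {f, g}`. -/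
lemma stmt17_mem_bzl {f g : S2 k} {a1 b1 a2 b2 : ℕ}
    (hf : IsWeightedHomogeneous bw f (a1, b1)) (hg : IsWeightedHomogeneous bw g (a2, b2))
    {u w : Fin 2 → k} (hu : u ≠ 0) (hw : w ≠ 0)
    (hfu : MvPolynomial.eval (Sum.elim u w) f = 0)
    (hgu : MvPolynomial.eval (Sum.elim u w) g = 0) :
    (Projectivization.mk k u hu, Projectivization.mk k w hw)
      ∈ biZeroLocus (Ideal.span {f, g}) := by
  intro z hz d
  obtain ⟨p, q, rfl⟩ := Ideal.mem_span_pair.mp hz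
  obtain ⟨p', hp'⟩ := stmt17_comp_mul bw hf p d
  obtain ⟨q', hq'⟩ := stmt17_comp_mul bw hg q d
  rw [map_add, hp', hq']
  obtain ⟨a, ha⟩ := Projectivization.exists_smul_eq_mk_rep k u hu
  obtain ⟨b, hb⟩ := Projectivization.exists_smul_eq_mk_rep k w hw
  have e1 : (Projectivization.mk k u hu).rep = (a : k) • u := by
    rw [← ha, Units.smul_def]
  have e2 : (Projectivization.mk k w hw).rep = (b : k) • w := by
    rw [← hb, Units.smul_def]
  show MvPolynomial.eval _ _ = 0
  rw [show (Sum.elim (Projectivization.mk k u hu, Projectivization.mk k w hw).1.rep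
        (Projectivization.mk k u hu, Projectivization.mk k w hw).2.rep)
      = Sum.elim ((a : k) • u) ((b : k) • w) by rw [← e1, ← e2]]
  rw [map_add, map_mul, map_mul, stmt17_eval_scale hf, stmt17_eval_scale hg, hfu, hgu]
  ring

/-- Iterated saturation. -/
lemma stmt17_sat_chain {I : Ideal (S2 k)} (hsat : IsSat I) :
    ∀ (n : ℕ) (t : S2 k),
      (∀ s : Multiset (Fin 2 × Fin 2), Multiset.card s = n →
        (s.map fun p => (X (Sum.inl p.1) * X (Sum.inr p.2) : S2 k)).prod * t ∈ I) →
      t ∈ I := by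
  intro n
  induction n with
  | zero =>
    intro t ht
    simpa using ht 0 rfl
  | succ n ih =>
    intro t ht
    apply hsat
    intro i j
    apply ih
    intro s hs
    have h2 := ht ((i, j) ::ₘ s) (by simp [hs])
    rw [Multiset.map_cons, Multiset.prod_cons] at h2
    have e : (Multiset.map (fun p => (X (Sum.inl p.1) * X (Sum.inr p.2) : S2 k)) s).prod *
        (X (Sum.inl i) * X (Sum.inr j) * t)
        = X (Sum.inl i) * X (Sum.inr j) *
          (Multiset.map (fun p => (X (Sum.inl p.1) * X (Sum.inr p.2) : S2 k)) s).prod * t := by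
      ring
    rw [e]
    exact h2

lemma stmt17_pigeon (N : ℕ) (hN : 0 < N) (s : Multiset (Fin 2 × Fin 2))
    (hs : Multiset.card s = 4 * N) : ∃ a, N ≤ s.count a := by
  by_contra hc
  push_neg at hc
  have h2 : Multiset.card s = ∑ a ∈ s.toFinset, s.count a :=
    (Multiset.toFinset_sum_count_eq s).symm
  have h3 : ∑ a ∈ s.toFinset, s.count a ≤ ∑ _a ∈ s.toFinset, (N - 1) :=
    Finset.sum_le_sum fun a _ => Nat.le_sub_one_of_lt (hc a)
  have h4 : ∑ _a ∈ s.toFinset, (N - 1) = s.toFinset.card * (N - 1) := by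
    rw [Finset.sum_const, smul_eq_mul]
  have h5 : s.toFinset.card ≤ 4 := by
    have h6 := Finset.card_le_univ s.toFinset
    simpa using h6
  have h7 := Nat.mul_le_mul_right (N - 1) h5
  omega

/-- A nonzero element of a complete intersection of two forms with positive
second bidegrees cannot be a polynomial in the x-variables only. -/
lemma stmt17_purex_eq_zero {f g z : S2 k} {a1 b1 a2 b2 : ℕ}
    (hf : IsWeightedHomogeneous bw f (a1, b1)) (hg : IsWeightedHomogeneous bw g (a2, b2))
    (hb1 : 0 < b1) (hb2 : 0 < b2)
    (hz : z ∈ Ideal.span {f, g})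
    (hzs : z ∈ supported k (Set.range (Sum.inl : Fin 2 → BiVar))) : z = 0 := by
  classical
  set w2 : BiVar → ℕ := fun s => (bw s).2 with hw2
  obtain ⟨p, q, hpq⟩ := Ideal.mem_span_pair.mp hz
  have hf2 : IsWeightedHomogeneous w2 f b1 := by
    intro μ hμ
    rw [hw2, stmt17_weight_proj2, hf hμ]
  have hg2 : IsWeightedHomogeneous w2 g b2 := by
    intro μ hμ
    rw [hw2, stmt17_weight_proj2, hg hμ]
  have hz0 : IsWeightedHomogeneous w2 z 0 := by
    intro μ hμ
    rw [Finsupp.weight_apply, Finsupp.sum]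
    apply Finset.sum_eq_zero
    intro s hs
    have hsv : s ∈ z.vars := (mem_vars s).mpr ⟨μ, mem_support_iff.mpr hμ, hs⟩
    obtain ⟨i, rfl⟩ := (mem_supported.mp hzs) hsv
    simp [hw2, bw]
  have e1 : weightedHomogeneousComponent w2 0 z = z :=
    hz0.weightedHomogeneousComponent_same
  have hmulzero : ∀ (p' h' : S2 k) (b : ℕ), 0 < b → IsWeightedHomogeneous w2 h' b →
      weightedHomogeneousComponent w2 0 (p' * h') = 0 := by
    intro p' h' b hb hh
    apply weightedHomogeneousComponent_eq_zero'
    intro μ hμ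
    obtain ⟨μ1, hμ1, μ2, hμ2, rfl⟩ := Finset.mem_add.mp (support_mul p' h' hμ)
    have hb2' : Finsupp.weight w2 μ2 = b := hh (mem_support_iff.mp hμ2)
    rw [map_add, hb2']
    omega
  have e2 := hmulzero p f b1 hb1 hf2
  have e3 := hmulzero q g b2 hb2 hg2
  rw [← e1, ← hpq, map_add, e2, e3, add_zero]

/-- Symmetric version: pure y-variable polynomials. -/
lemma stmt17_purey_eq_zero {f g z : S2 k} {a1 b1 a2 b2 : ℕ}
    (hf : IsWeightedHomogeneous bw f (a1, b1)) (hg : IsWeightedHomogeneous bw g (a2, b2))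
    (ha1 : 0 < a1) (ha2 : 0 < a2)
    (hz : z ∈ Ideal.span {f, g})
    (hzs : z ∈ supported k (Set.range (Sum.inr : Fin 2 → BiVar))) : z = 0 := by
  classical
  set w1 : BiVar → ℕ := fun s => (bw s).1 with hw1
  obtain ⟨p, q, hpq⟩ := Ideal.mem_span_pair.mp hz
  have hf2 : IsWeightedHomogeneous w1 f a1 := by
    intro μ hμ
    rw [hw1, stmt17_weight_proj1, hf hμ]
  have hg2 : IsWeightedHomogeneous w1 g a2 := by
    intro μ hμ
    rw [hw1, stmt17_weight_proj1, hg hμ]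
  have hz0 : IsWeightedHomogeneous w1 z 0 := by
    intro μ hμ
    rw [Finsupp.weight_apply, Finsupp.sum]
    apply Finset.sum_eq_zero
    intro s hs
    have hsv : s ∈ z.vars := (mem_vars s).mpr ⟨μ, mem_support_iff.mpr hμ, hs⟩
    obtain ⟨i, rfl⟩ := (mem_supported.mp hzs) hsv
    simp [hw1, bw]
  have e1 : weightedHomogeneousComponent w1 0 z = z :=
    hz0.weightedHomogeneousComponent_same
  have hmulzero : ∀ (p' h' : S2 k) (b : ℕ), 0 < b → IsWeightedHomogeneous w1 h' b →
      weightedHomogeneousComponent w1 0 (p' * h') = 0 := by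
    intro p' h' b hb hh
    apply weightedHomogeneousComponent_eq_zero'
    intro μ hμ
    obtain ⟨μ1, hμ1, μ2, hμ2, rfl⟩ := Finset.mem_add.mp (support_mul p' h' hμ)
    have hb2' : Finsupp.weight w1 μ2 = b := hh (mem_support_iff.mp hμ2)
    rw [map_add, hb2']
    omega
  have e2 := hmulzero p f a1 ha1 hf2
  have e3 := hmulzero q g a2 ha2 hg2
  rw [← e1, ← hpq, map_add, e2, e3, add_zero]

/-- Core contradiction: both forms cannot have positive y-degree. -/
lemma stmt17_core_y [IsAlgClosed k] {f g : S2 k} {a1 b1 a2 b2 : ℕ}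
    (hf : IsWeightedHomogeneous bw f (a1, b1)) (hg : IsWeightedHomogeneous bw g (a2, b2))
    (hb1 : 0 < b1) (hb2 : 0 < b2)
    (hsat : IsSat (Ideal.span {f, g}))
    (hfin : (biZeroLocus (Ideal.span {f, g})).Finite) : False := by
  classical
  set I : Ideal (S2 k) := Ideal.span {f, g} with hI
  have hfI : f ∈ I := Ideal.subset_span (by simp)
  have hgI : g ∈ I := Ideal.subset_span (by simp)
  have hXfin : ((fun P : PtQ k => P.1) '' biZeroLocus I).Finite := hfin.image _
  set Fs := hXfin.toFinset with hFs
  set ℓ : P1 k → S2 k :=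
    fun x => C (x.rep 1) * X (Sum.inl 0) - C (x.rep 0) * X (Sum.inl 1) with hℓ
  set h : S2 k := ∏ x ∈ Fs, ℓ x with hh
  -- each linear factor is nonzero
  have hl0 : ∀ x : P1 k, ℓ x ≠ 0 := by
    intro x hx
    apply x.rep_nonzero
    have h1 := congrArg (MvPolynomial.eval (Sum.elim ![(1:k), 0] (0 : Fin 2 → k)))  hx
    have h2 := congrArg (MvPolynomial.eval (Sum.elim ![(0:k), 1] (0 : Fin 2 → k)))  hx
    rw [hℓ] at h1 h2
    simp only [map_sub, map_mul, eval_C, eval_X, Sum.elim_inl, map_zero] at h1 h2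
    simp only [Matrix.cons_val_zero, Matrix.cons_val_one, Matrix.head_cons,
      mul_one, mul_zero, sub_zero, zero_sub, neg_eq_zero] at h1 h2
    funext i
    fin_cases i <;> simp [h1, h2]
  have hh0 : h ≠ 0 := Finset.prod_ne_zero_iff.mpr fun x _ => hl0 x
  -- h is a polynomial in the x-variables only
  have hCmem : ∀ c : k, (C c : S2 k) ∈ supported k (Set.range (Sum.inl : Fin 2 → BiVar)) := by
    intro c
    have h' := Subalgebra.algebraMap_mem
      (supported k (Set.range (Sum.inl : Fin 2 → BiVar))) c
    rwa [MvPolynomial.algebraMap_eq] at h'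
  have hhsupp : h ∈ supported k (Set.range (Sum.inl : Fin 2 → BiVar)) := by
    apply Subalgebra.prod_mem
    intro x _
    show C (x.rep 1) * X (Sum.inl 0) - C (x.rep 0) * X (Sum.inl 1) ∈
      supported k (Set.range (Sum.inl : Fin 2 → BiVar))
    apply Subalgebra.sub_mem
    · exact Subalgebra.mul_mem _ (hCmem _) (X_mem_supported.mpr ⟨0, rfl⟩)
    · exact Subalgebra.mul_mem _ (hCmem _) (X_mem_supported.mpr ⟨1, rfl⟩)
  -- h vanishes on the x-coordinates of the zero locus
  have hvan : ∀ u w : Fin 2 → k, ∀ hu : u ≠ 0, w ≠ 0 →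
      MvPolynomial.eval (Sum.elim u w) f = 0 → MvPolynomial.eval (Sum.elim u w) g = 0 →
      MvPolynomial.eval (Sum.elim u w) h = 0 := by
    intro u w hu hw hfu hgu
    have hmem := stmt17_mem_bzl hf hg hu hw hfu hgu
    have hx1 : Projectivization.mk k u hu ∈ Fs := by
      rw [hFs, Set.Finite.mem_toFinset]
      exact ⟨_, hmem, rfl⟩
    rw [hh, map_prod]
    apply Finset.prod_eq_zero hx1
    obtain ⟨a, ha⟩ := Projectivization.exists_smul_eq_mk_rep k u hu
    have h0 : (Projectivization.mk k u hu).rep 0 = (a : k) * u 0 := by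
      rw [← ha, Units.smul_def]; rfl
    have h1 : (Projectivization.mk k u hu).rep 1 = (a : k) * u 1 := by
      rw [← ha, Units.smul_def]; rfl
    rw [hℓ]
    simp only [map_sub, map_mul, eval_C, eval_X, Sum.elim_inl, h0, h1]
    ring
  -- the saturating monomial multiples of h lie in the radical of I
  have hrad : ∀ i j : Fin 2, X (Sum.inl i) * X (Sum.inr j) * h ∈ I.radical := by
    intro i j
    rw [← MvPolynomial.vanishingIdeal_zeroLocus_eq_radical (K := k), MvPolynomial.mem_vanishingIdeal_iff]
    intro v hv
    change MvPolynomial.eval v _ = 0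
    have hveq : v = Sum.elim (v ∘ Sum.inl) (v ∘ Sum.inr) := by
      funext s; cases s <;> rfl
    have hfv : MvPolynomial.eval (Sum.elim (v ∘ Sum.inl) (v ∘ Sum.inr)) f = 0 := by
      rw [← hveq]; exact MvPolynomial.mem_zeroLocus_iff.mp hv f hfI
    have hgv : MvPolynomial.eval (Sum.elim (v ∘ Sum.inl) (v ∘ Sum.inr)) g = 0 := by
      rw [← hveq]; exact MvPolynomial.mem_zeroLocus_iff.mp hv g hgI
    rw [map_mul, map_mul, eval_X, eval_X]
    by_cases hu0 : (v ∘ Sum.inl) = 0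
    · have : v (Sum.inl i) = 0 := congrFun hu0 i
      rw [this, zero_mul, zero_mul]
    by_cases hw0 : (v ∘ Sum.inr) = 0
    · have : v (Sum.inr j) = 0 := congrFun hw0 j
      rw [this, mul_zero, zero_mul]
    have hhv : MvPolynomial.eval v h = 0 := by
      rw [hveq]
      exact hvan _ _ hu0 hw0 hfv hgv
    rw [hhv, mul_zero]
  -- extract powers
  have hmono : ∀ (z : S2 k) (n N : ℕ), n ≤ N → z ^ n ∈ I → z ^ N ∈ I := by
    intro z n N hle hz
    have e : z ^ N = z ^ (N - n) * z ^ n := by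
      rw [← pow_add]; congr 1; omega
    rw [e]; exact Ideal.mul_mem_left _ _ hz
  have hpows : ∀ i j : Fin 2, ∃ n, (X (Sum.inl i) * X (Sum.inr j) * h) ^ n ∈ I :=
    fun i j => Ideal.mem_radical_iff.mp (hrad i j)
  choose nf hnf using hpows
  set N : ℕ := (∑ p : Fin 2 × Fin 2, nf p.1 p.2) + 1 with hNdef
  have hN : 0 < N := Nat.succ_pos _
  have hNij : ∀ i j : Fin 2, (X (Sum.inl i) * X (Sum.inr j) * h) ^ N ∈ I := by
    intro i j
    refine hmono _ (nf i j) N ?_ (hnf i j)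
    have hle : nf i j ≤ ∑ p : Fin 2 × Fin 2, nf p.1 p.2 :=
      Finset.single_le_sum (f := fun p : Fin 2 × Fin 2 => nf p.1 p.2)
        (fun _ _ => Nat.zero_le _) (Finset.mem_univ (i, j))
    omega
  -- conclude h ^ (4 * N) ∈ I by iterated saturation
  have hmem : h ^ (4 * N) ∈ I := by
    apply stmt17_sat_chain hsat (4 * N)
    intro s hs
    obtain ⟨a, ha⟩ := stmt17_pigeon N hN s hs
    obtain ⟨u, hu⟩ :=
      Multiset.le_iff_exists_add.mp (Multiset.le_count_iff_replicate_le.mp ha)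
    rw [hu, Multiset.map_add, Multiset.prod_add, Multiset.map_replicate,
      Multiset.prod_replicate]
    have h4 : h ^ (4 * N) = h ^ N * h ^ (3 * N) := by
      rw [← pow_add]; congr 1; omega
    rw [h4]
    have e : (X (Sum.inl a.1) * X (Sum.inr a.2)) ^ N *
          (Multiset.map (fun p => (X (Sum.inl p.1) * X (Sum.inr p.2) : S2 k)) u).prod *
          (h ^ N * h ^ (3 * N))
        = (X (Sum.inl a.1) * X (Sum.inr a.2) * h) ^ N *
          ((Multiset.map (fun p => (X (Sum.inl p.1) * X (Sum.inr p.2) : S2 k)) u).prod *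
            h ^ (3 * N)) := by
      rw [mul_pow]; ring
    rw [e]
    exact Ideal.mul_mem_right _ _ (hNij a.1 a.2)
  have hzero : h ^ (4 * N) = 0 :=
    stmt17_purex_eq_zero hf hg hb1 hb2 hmem (pow_mem hhsupp _)
  exact pow_ne_zero _ hh0 hzero

/-- Core contradiction: both forms cannot have positive x-degree. -/
lemma stmt17_core_x [IsAlgClosed k] {f g : S2 k} {a1 b1 a2 b2 : ℕ}
    (hf : IsWeightedHomogeneous bw f (a1, b1)) (hg : IsWeightedHomogeneous bw g (a2, b2))
    (ha1 : 0 < a1) (ha2 : 0 < a2)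
    (hsat : IsSat (Ideal.span {f, g}))
    (hfin : (biZeroLocus (Ideal.span {f, g})).Finite) : False := by
  classical
  set I : Ideal (S2 k) := Ideal.span {f, g} with hI
  have hfI : f ∈ I := Ideal.subset_span (by simp)
  have hgI : g ∈ I := Ideal.subset_span (by simp)
  have hXfin : ((fun P : PtQ k => P.2) '' biZeroLocus I).Finite := hfin.image _
  set Fs := hXfin.toFinset with hFs
  set ℓ : P1 k → S2 k :=
    fun x => C (x.rep 1) * X (Sum.inr 0) - C (x.rep 0) * X (Sum.inr 1) with hℓ
  set h : S2 k := ∏ x ∈ Fs, ℓ x with hh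
  -- each linear factor is nonzero
  have hl0 : ∀ x : P1 k, ℓ x ≠ 0 := by
    intro x hx
    apply x.rep_nonzero
    have h1 := congrArg (MvPolynomial.eval ((Sum.elim (0 : Fin 2 → k) ![(1:k), 0])))  hx
    have h2 := congrArg (MvPolynomial.eval ((Sum.elim (0 : Fin 2 → k) ![(0:k), 1])))  hx
    rw [hℓ] at h1 h2
    simp only [map_sub, map_mul, eval_C, eval_X, Sum.elim_inr, map_zero] at h1 h2
    simp only [Matrix.cons_val_zero, Matrix.cons_val_one, Matrix.head_cons,
      mul_one, mul_zero, sub_zero, zero_sub, neg_eq_zero] at h1 h2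
    funext i
    fin_cases i <;> simp [h1, h2]
  have hh0 : h ≠ 0 := Finset.prod_ne_zero_iff.mpr fun x _ => hl0 x
  -- h is a polynomial in the x-variables only
  have hCmem : ∀ c : k, (C c : S2 k) ∈ supported k (Set.range (Sum.inr : Fin 2 → BiVar)) := by
    intro c
    have h' := Subalgebra.algebraMap_mem
      (supported k (Set.range (Sum.inr : Fin 2 → BiVar))) c
    rwa [MvPolynomial.algebraMap_eq] at h'
  have hhsupp : h ∈ supported k (Set.range (Sum.inr : Fin 2 → BiVar)) := by
    apply Subalgebra.prod_mem
    intro x _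
    show C (x.rep 1) * X (Sum.inr 0) - C (x.rep 0) * X (Sum.inr 1) ∈
      supported k (Set.range (Sum.inr : Fin 2 → BiVar))
    apply Subalgebra.sub_mem
    · exact Subalgebra.mul_mem _ (hCmem _) (X_mem_supported.mpr ⟨0, rfl⟩)
    · exact Subalgebra.mul_mem _ (hCmem _) (X_mem_supported.mpr ⟨1, rfl⟩)
  -- h vanishes on the x-coordinates of the zero locus
  have hvan : ∀ u w : Fin 2 → k, u ≠ 0 → ∀ hw : w ≠ 0,
      MvPolynomial.eval (Sum.elim u w) f = 0 → MvPolynomial.eval (Sum.elim u w) g = 0 →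
      MvPolynomial.eval (Sum.elim u w) h = 0 := by
    intro u w hu hw hfu hgu
    have hmem := stmt17_mem_bzl hf hg hu hw hfu hgu
    have hx1 : Projectivization.mk k w hw ∈ Fs := by
      rw [hFs, Set.Finite.mem_toFinset]
      exact ⟨_, hmem, rfl⟩
    rw [hh, map_prod]
    apply Finset.prod_eq_zero hx1
    obtain ⟨a, ha⟩ := Projectivization.exists_smul_eq_mk_rep k w hw
    have h0 : (Projectivization.mk k w hw).rep 0 = (a : k) * w 0 := by
      rw [← ha, Units.smul_def]; rfl
    have h1 : (Projectivization.mk k w hw).rep 1 = (a : k) * w 1 := by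
      rw [← ha, Units.smul_def]; rfl
    rw [hℓ]
    simp only [map_sub, map_mul, eval_C, eval_X, Sum.elim_inr, h0, h1]
    ring
  -- the saturating monomial multiples of h lie in the radical of I
  have hrad : ∀ i j : Fin 2, X (Sum.inl i) * X (Sum.inr j) * h ∈ I.radical := by
    intro i j
    rw [← MvPolynomial.vanishingIdeal_zeroLocus_eq_radical (K := k), MvPolynomial.mem_vanishingIdeal_iff]
    intro v hv
    change MvPolynomial.eval v _ = 0
    have hveq : v = Sum.elim (v ∘ Sum.inl) (v ∘ Sum.inr) := by
      funext s; cases s <;> rfl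
    have hfv : MvPolynomial.eval (Sum.elim (v ∘ Sum.inl) (v ∘ Sum.inr)) f = 0 := by
      rw [← hveq]; exact MvPolynomial.mem_zeroLocus_iff.mp hv f hfI
    have hgv : MvPolynomial.eval (Sum.elim (v ∘ Sum.inl) (v ∘ Sum.inr)) g = 0 := by
      rw [← hveq]; exact MvPolynomial.mem_zeroLocus_iff.mp hv g hgI
    rw [map_mul, map_mul, eval_X, eval_X]
    by_cases hu0 : (v ∘ Sum.inl) = 0
    · have : v (Sum.inl i) = 0 := congrFun hu0 i
      rw [this, zero_mul, zero_mul]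
    by_cases hw0 : (v ∘ Sum.inr) = 0
    · have : v (Sum.inr j) = 0 := congrFun hw0 j
      rw [this, mul_zero, zero_mul]
    have hhv : MvPolynomial.eval v h = 0 := by
      rw [hveq]
      exact hvan _ _ hu0 hw0 hfv hgv
    rw [hhv, mul_zero]
  -- extract powers
  have hmono : ∀ (z : S2 k) (n N : ℕ), n ≤ N → z ^ n ∈ I → z ^ N ∈ I := by
    intro z n N hle hz
    have e : z ^ N = z ^ (N - n) * z ^ n := by
      rw [← pow_add]; congr 1; omega
    rw [e]; exact Ideal.mul_mem_left _ _ hz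
  have hpows : ∀ i j : Fin 2, ∃ n, (X (Sum.inl i) * X (Sum.inr j) * h) ^ n ∈ I :=
    fun i j => Ideal.mem_radical_iff.mp (hrad i j)
  choose nf hnf using hpows
  set N : ℕ := (∑ p : Fin 2 × Fin 2, nf p.1 p.2) + 1 with hNdef
  have hN : 0 < N := Nat.succ_pos _
  have hNij : ∀ i j : Fin 2, (X (Sum.inl i) * X (Sum.inr j) * h) ^ N ∈ I := by
    intro i j
    refine hmono _ (nf i j) N ?_ (hnf i j)
    have hle : nf i j ≤ ∑ p : Fin 2 × Fin 2, nf p.1 p.2 :=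
      Finset.single_le_sum (f := fun p : Fin 2 × Fin 2 => nf p.1 p.2)
        (fun _ _ => Nat.zero_le _) (Finset.mem_univ (i, j))
    omega
  -- conclude h ^ (4 * N) ∈ I by iterated saturation
  have hmem : h ^ (4 * N) ∈ I := by
    apply stmt17_sat_chain hsat (4 * N)
    intro s hs
    obtain ⟨a, ha⟩ := stmt17_pigeon N hN s hs
    obtain ⟨u, hu⟩ :=
      Multiset.le_iff_exists_add.mp (Multiset.le_count_iff_replicate_le.mp ha)
    rw [hu, Multiset.map_add, Multiset.prod_add, Multiset.map_replicate,
      Multiset.prod_replicate]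
    have h4 : h ^ (4 * N) = h ^ N * h ^ (3 * N) := by
      rw [← pow_add]; congr 1; omega
    rw [h4]
    have e : (X (Sum.inl a.1) * X (Sum.inr a.2)) ^ N *
          (Multiset.map (fun p => (X (Sum.inl p.1) * X (Sum.inr p.2) : S2 k)) u).prod *
          (h ^ N * h ^ (3 * N))
        = (X (Sum.inl a.1) * X (Sum.inr a.2) * h) ^ N *
          ((Multiset.map (fun p => (X (Sum.inl p.1) * X (Sum.inr p.2) : S2 k)) u).prod *
            h ^ (3 * N)) := by
      rw [mul_pow]; ring
    rw [e]
    exact Ideal.mul_mem_right _ _ (hNij a.1 a.2)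
  have hzero : h ^ (4 * N) = 0 :=
    stmt17_purey_eq_zero hf hg ha1 ha2 hmem (pow_mem hhsupp _)
  exact pow_ne_zero _ hh0 hzero

end StmtAux

/-- a zero-dimensional complete intersection in P¹ × P¹ is the intersection
of a curve of type (a,0) and a curve of type (0,b). -/
theorem stmt17 (k : Type) [Field k] [IsAlgClosed k]
    (f g : S2 k) (a1 b1 a2 b2 : ℕ)
    (hf : IsWeightedHomogeneous bw f (a1, b1))
    (hg : IsWeightedHomogeneous bw g (a2, b2))
    (hf0 : f ≠ 0)
    (hreg : ∀ h : S2 k, g * h ∈ Ideal.span {f} → h ∈ Ideal.span {f})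
    (hne : Ideal.span {f, g} ≠ (⊤ : Ideal (S2 k)))
    (hsat : IsSat (Ideal.span {f, g}))
    (hfin : (biZeroLocus (Ideal.span {f, g})).Finite) :
    (b1 = 0 ∧ a2 = 0 ∧ 0 < a1 ∧ 0 < b2) ∨ (a1 = 0 ∧ b2 = 0 ∧ 0 < b1 ∧ 0 < a2) := by
  classical
  have hfI : f ∈ Ideal.span {f, g} := Ideal.subset_span (by simp)
  have hgI : g ∈ Ideal.span {f, g} := Ideal.subset_span (by simp)
  haveI hwnt : Finsupp.NonTorsionWeight ℕ bw := by
    apply Finsupp.nonTorsionWeight_of ℕ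
    intro s
    cases s <;> simp [bw, Prod.ext_iff]
  have hconst : ∀ z : S2 k, IsWeightedHomogeneous bw z ((0 : ℕ), (0 : ℕ)) →
      z = C (coeff 0 z) := by
    intro z hzh
    ext μ
    rcases eq_or_ne μ 0 with rfl | hμ
    · simp
    · rw [coeff_C, if_neg (Ne.symm hμ)]
      by_contra hc
      exact hμ ((Finsupp.weight_eq_zero_iff_eq_zero bw).mp
        (show Finsupp.weight bw μ = 0 from hzh hc))
  have hfne : ¬(a1 = 0 ∧ b1 = 0) := by
    rintro ⟨rfl, rfl⟩
    have hfc : f = C (coeff 0 f) := hconst f hf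
    have hc0 : coeff 0 f ≠ 0 := fun hc => hf0 (by rw [hfc, hc, map_zero])
    have hu : IsUnit f := by
      rw [hfc]; exact (isUnit_iff_ne_zero.mpr hc0).map (C : k →+* S2 k)
    exact hne (Ideal.eq_top_of_isUnit_mem _ hfI hu)
  have hgne : ¬(a2 = 0 ∧ b2 = 0) := by
    rintro ⟨rfl, rfl⟩
    have hgc : g = C (coeff 0 g) := hconst g hg
    rcases eq_or_ne (coeff 0 g) 0 with hc | hc
    · have hg0 : g = 0 := by rw [hgc, hc, map_zero]
      have h1 : (1 : S2 k) ∈ Ideal.span {f} :=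
        hreg 1 (by rw [hg0, zero_mul]; exact zero_mem _)
      have h2 : (1 : S2 k) ∈ Ideal.span {f, g} :=
        Ideal.span_mono (Set.singleton_subset_iff.mpr (Set.mem_insert f {g})) h1
      exact hne ((Ideal.eq_top_iff_one _).mpr h2)
    · exact hne (Ideal.eq_top_of_isUnit_mem _ hgI
        (by rw [hgc]; exact (isUnit_iff_ne_zero.mpr hc).map (C : k →+* S2 k)))
  by_cases hb1 : b1 = 0
  · have ha1 : 0 < a1 := Nat.pos_of_ne_zero fun h0 => hfne ⟨h0, hb1⟩
    have ha2 : a2 = 0 := by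
      by_contra h0
      exact stmt17_core_x hf hg ha1 (Nat.pos_of_ne_zero h0) hsat hfin
    have hb2 : 0 < b2 := Nat.pos_of_ne_zero fun h0 => hgne ⟨ha2, h0⟩
    exact Or.inl ⟨hb1, ha2, ha1, hb2⟩
  · have hb1' : 0 < b1 := Nat.pos_of_ne_zero hb1
    have hb2 : b2 = 0 := by
      by_contra h0
      exact stmt17_core_y hf hg hb1' (Nat.pos_of_ne_zero h0) hsat hfin
    have ha2 : 0 < a2 := Nat.pos_of_ne_zero fun h0 => hgne ⟨h0, hb2⟩
    have ha1 : a1 = 0 := by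
      by_contra h0
      exact stmt17_core_x hf hg (Nat.pos_of_ne_zero h0) ha2 hsat hfin
    exact Or.inr ⟨ha1, hb2, hb1', ha2⟩
end
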